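/- arXiv:0705.2915 — 2 statements merged into one kernel-verified Lean document; each statement's English description precedes it below -/
import Mathlib

section
/- If T is an increasing tableau of skew shape ν/λ (entries strictly increase along each row and each column) and {x_i} is any set of inner corners of λ, then the result K-jdt_{x_i}(T) of the K-theoretic jeu de taquin slide is again an increasing tableau. -/
open Finset
open scoped Classical

/-- A box of a Young diagram: (row, column), rows increasing downward. -/
abbrev Box : Type := ℕ × ℕ

/-- A Young diagram: a finite lower set in both coordinates. -/
def IsYoung (μ : Finset Box) : Prop :=
  (∀ r c : ℕ, (r + 1, c) ∈ μ → (r, c) ∈ μ) ∧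
  (∀ r c : ℕ, (r, c + 1) ∈ μ → (r, c) ∈ μ)

/-- Two boxes are adjacent (share an edge). -/
def adjB (a b : Box) : Prop :=
  (a.1 = b.1 ∧ (a.2 + 1 = b.2 ∨ b.2 + 1 = a.2)) ∨
  (a.2 = b.2 ∧ (a.1 + 1 = b.1 ∨ b.1 + 1 = a.1))

/-- Connectivity within a finite set of boxes. -/
def conn (S : Finset Box) (a b : Box) : Prop :=
  Relation.ReflTransGen (fun x y => x ∈ S ∧ y ∈ S ∧ adjB x y) a b

/-- Entries strictly increase along rows and columns. -/
def IncreasingOn (dom : Finset Box) (f : Box → ℕ) : Prop :=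
  (∀ r c : ℕ, (r, c) ∈ dom → (r, c + 1) ∈ dom → f (r, c) < f (r, c + 1)) ∧
  (∀ r c : ℕ, (r, c) ∈ dom → (r + 1, c) ∈ dom → f (r, c) < f (r + 1, c))

def maxEntry (dom : Finset Box) (f : Box → ℕ) : ℕ := dom.sup f

/-- An increasing tableau: positive entries, strictly increasing along rows and
columns, and every value `1,…,max` appears at least once. -/
def IsIncTab (dom : Finset Box) (f : Box → ℕ) : Prop :=
  IncreasingOn dom f ∧ (∀ b ∈ dom, 1 ≤ f b) ∧
  (∀ v : ℕ, 1 ≤ v → v ≤ maxEntry dom f → ∃ b ∈ dom, f b = v)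

/-- A standard Young tableau: an increasing tableau with distinct entries. -/
def IsSYT (dom : Finset Box) (f : Box → ℕ) : Prop :=
  IsIncTab dom f ∧ ∀ a ∈ dom, ∀ b ∈ dom, f a = f b → a = b

/-- An inner corner of `λ`: a maximally southeast box of `λ`. -/
def InnerCorner (lam : Finset Box) (x : Box) : Prop :=
  x ∈ lam ∧ (x.1 + 1, x.2) ∉ lam ∧ (x.1, x.2 + 1) ∉ lam

/-- An outer corner of `ν`: a maximally northwest box outside `ν`. -/
def OuterCorner (nu : Finset Box) (x : Box) : Prop :=
  x ∉ nu ∧ (x.1 = 0 ∨ (x.1 - 1, x.2) ∈ nu) ∧ (x.2 = 0 ∨ (x.1, x.2 - 1) ∈ nu)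

/-- No two boxes of `A` share a row or a column. -/
def NoTwoSameRowCol (A : Finset Box) : Prop :=
  ∀ a ∈ A, ∀ b ∈ A, a ≠ b → a.1 ≠ b.1 ∧ a.2 ≠ b.2

/-- One `switch` stage of a K-jdt slide: in the union of ribbons formed by the
•-boxes (`st.1`) and the boxes of the numerical region `st.2.1` with entry `i`,
swap the two symbols on every connected component with at least two boxes
(single-box components are unchanged).  The state is (dots, numerical domain,
numerical entries). -/
noncomputable def switchStep (st : Finset Box × Finset Box × (Box → ℕ)) (i : ℕ) :
    Finset Box × Finset Box × (Box → ℕ) :=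
  let dots := st.1
  let dom := st.2.1
  let f := st.2.2
  let S : Finset Box := dots ∪ dom.filter (fun b => f b = i)
  let sw : Box → Prop := fun b => ∃ b' ∈ S, b' ≠ b ∧ conn S b b'
  ( dom.filter (fun b => f b = i ∧ sw b) ∪ dots.filter (fun b => ¬ sw b),
    dom.filter (fun b => ¬ (f b = i ∧ sw b)) ∪ dots.filter sw,
    fun b => if b ∈ dots ∧ sw b then i else f b )

/-- The state of a K-jdt slide started with •'s at `xs`, after processing the
values `1, 2, …, m`. -/
noncomputable def KState (xs dom : Finset Box) (f : Box → ℕ) (m : ℕ) :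
    Finset Box × Finset Box × (Box → ℕ) :=
  (List.range m).foldl (fun st i => switchStep st (i + 1)) (xs, dom, f)

/-- The K-theoretic jeu de taquin slide of the tableau `(dom, f)` into the set
`xs` of inner corners: process the values `1,…,max` and discard the final •'s. -/
noncomputable def KJdt (xs dom : Finset Box) (f : Box → ℕ) : Finset Box × (Box → ℕ) :=
  ((KState xs dom f (maxEntry dom f)).2.1, (KState xs dom f (maxEntry dom f)).2.2)

/-- The state of a reverse K-jdt slide: •'s start at `xs` (outer corners) and the
values `m, m-1, …, 1` are processed in decreasing order. -/
noncomputable def KRevState (xs dom : Finset Box) (f : Box → ℕ) (m : ℕ) :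
    Finset Box × Finset Box × (Box → ℕ) :=
  (List.range m).foldr (fun i st => switchStep st (i + 1)) (xs, dom, f)

/-- A slide applied to the state (inner shape `λ`, tableau domain, entries). -/
noncomputable def doSlide (st : Finset Box × Finset Box × (Box → ℕ)) (xs : Finset Box) :
    Finset Box × Finset Box × (Box → ℕ) :=
  (st.1 \ xs, (KJdt xs st.2.1 st.2.2).1, (KJdt xs st.2.1 st.2.2).2)

/-- A reverse slide applied to the state (inner shape `λ`, tableau domain, entries). -/
noncomputable def doRevSlide (st : Finset Box × Finset Box × (Box → ℕ)) (xs : Finset Box) :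
    Finset Box × Finset Box × (Box → ℕ) :=
  (st.1 \ (KRevState xs st.2.1 st.2.2 (maxEntry st.2.1 st.2.2)).1,
   (KRevState xs st.2.1 st.2.2 (maxEntry st.2.1 st.2.2)).2.1,
   (KRevState xs st.2.1 st.2.2 (maxEntry st.2.1 st.2.2)).2.2)

/-- One step of a rectification: a K-jdt slide into a nonempty set of inner corners. -/
def RectStep (p q : Finset Box × Finset Box × (Box → ℕ)) : Prop :=
  ∃ xs : Finset Box, xs.Nonempty ∧ (∀ x ∈ xs, InnerCorner p.1 x) ∧ q = doSlide p xs

/-- The tableau `(dom, f)` of shape `ν/λ` admits a rectification order ending at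
the straight-shape tableau `(dom', f')`. -/
def RectTo (lam dom : Finset Box) (f : Box → ℕ) (dom' : Finset Box) (f' : Box → ℕ) : Prop :=
  ∃ g : Box → ℕ, Relation.ReflTransGen RectStep (lam, dom, f) (∅, dom', g) ∧
    ∀ b ∈ dom', g b = f' b

def rowLen (μ : Finset Box) (r : ℕ) : ℕ := (μ.filter (fun b => b.1 = r)).card

/-- The superstandard tableau of straight shape `μ`: rows filled consecutively. -/
def sstd (μ : Finset Box) : Box → ℕ :=
  fun b => (∑ i ∈ Finset.range b.1, rowLen μ i) + b.2 + 1

/-- `a` occurs before `b` in the reading word (rows left to right, bottom to top). -/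
def ReadBefore (a b : Box) : Prop := b.1 < a.1 ∨ (a.1 = b.1 ∧ a.2 < b.2)

/-- Length of the longest strictly increasing subsequence of the reading word. -/
noncomputable def LIS (dom : Finset Box) (f : Box → ℕ) : ℕ :=
  (dom.powerset.filter
    (fun I => ∀ a ∈ I, ∀ b ∈ I, ReadBefore a b → f a < f b)).sup Finset.card

/-- One step of K-infusion: slide the boxes carrying the largest label `m` of the
inner tableau through the outer tableau, recording `m` at the vacated holes. -/
noncomputable def infusionStep
    (st : (Finset Box × (Box → ℕ)) × (Finset Box × (Box → ℕ)) × (Finset Box × (Box → ℕ))) :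
    (Finset Box × (Box → ℕ)) × (Finset Box × (Box → ℕ)) × (Finset Box × (Box → ℕ)) :=
  let m := maxEntry st.1.1 st.1.2
  let xs := st.1.1.filter (fun b => st.1.2 b = m)
  let ks := KState xs st.2.1.1 st.2.1.2 (maxEntry st.2.1.1 st.2.1.2)
  ( (st.1.1 \ xs, st.1.2),
    (ks.2.1, ks.2.2),
    (st.2.2.1 ∪ ks.1, fun b => if b ∈ ks.1 then m else st.2.2.2 b) )

/-- K-infusion of the pair `(T, U)`, where `U`'s shape extends `T`'s shape:
returns `(K-infusion₁(T,U), K-infusion₂(T,U))`. -/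
noncomputable def KInfusion (Tdom : Finset Box) (Tf : Box → ℕ)
    (Udom : Finset Box) (Uf : Box → ℕ) :
    (Finset Box × (Box → ℕ)) × (Finset Box × (Box → ℕ)) :=
  ((infusionStep^[maxEntry Tdom Tf] ((Tdom, Tf), (Udom, Uf), (∅, fun _ => 0))).2.1,
   (infusionStep^[maxEntry Tdom Tf] ((Tdom, Tf), (Udom, Uf), (∅, fun _ => 0))).2.2)

/-- `Δ(T)`: erase the entry `1` at the northwest corner, subtract one from the
remaining entries, and slide into the vacated corner. -/
noncomputable def Delta (p : Finset Box × (Box → ℕ)) : Finset Box × (Box → ℕ) :=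
  KJdt {((0 : ℕ), (0 : ℕ))} (p.1.erase (0, 0)) (fun b => p.2 b - 1)

/-- K-evacuation: box `b` receives label `i` when `b` belongs to the shape of
`Δ^{i-1}(T)` but not to the shape of `Δ^{i}(T)`. -/
noncomputable def Kevac (p : Finset Box × (Box → ℕ)) : Box → ℕ :=
  fun b => sInf {i : ℕ | b ∉ (Delta^[i] p).1}

/-- A horizontal strip: no two boxes in the same column. -/
def HorizontalStrip (dom : Finset Box) : Prop :=
  ∀ a ∈ dom, ∀ b ∈ dom, a ≠ b → a.2 ≠ b.2

def LeftmostIn (dom : Finset Box) (r c : ℕ) : Prop :=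
  (r, c) ∈ dom ∧ ∀ c' < c, (r, c') ∉ dom

def RightmostIn (dom : Finset Box) (r c : ℕ) : Prop :=
  (r, c) ∈ dom ∧ ∀ c' > c, (r, c') ∉ dom

/-- A `t`-Pieri filling of a horizontal strip: entries of each row consecutive,
the bottom row starts with `1`, each other row starts with the last entry of the
next nonempty row below it, or with that entry plus one; entries are `1,…,t`. -/
def IsPieri (dom : Finset Box) (f : Box → ℕ) (t : ℕ) : Prop :=
  HorizontalStrip dom ∧
  (∀ r c : ℕ, (r, c) ∈ dom → (r, c + 1) ∈ dom → f (r, c + 1) = f (r, c) + 1) ∧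
  (∀ r c : ℕ, LeftmostIn dom r c → (∀ b ∈ dom, b.1 ≤ r) → f (r, c) = 1) ∧
  (∀ r c r' c' : ℕ, LeftmostIn dom r c → RightmostIn dom r' c' → r < r' →
    (∀ b ∈ dom, ¬ (r < b.1 ∧ b.1 < r')) →
    (f (r, c) = f (r', c') ∨ f (r, c) = f (r', c') + 1)) ∧
  (∀ b ∈ dom, 1 ≤ f b ∧ f b ≤ t) ∧ (dom.Nonempty → ∃ b ∈ dom, f b = t)

/-- The domain of the one-row shape `(t)`. -/
def rowDom (t : ℕ) : Finset Box := (Finset.range t).image (fun c => ((0 : ℕ), c))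

/-- The entries of the superstandard one-row tableau `S_(t)`. -/
def rowEnt : Box → ℕ := fun b => b.2 + 1

def numRows (dom : Finset Box) : ℕ := (dom.image Prod.fst).card

/-- The number of increasing tableaux of shape `ν/λ` whose K-rectification (for
some, equivalently by Theorem 1 any, rectification order) is the superstandard
tableau `S_μ`.  Tableaux are normalized to vanish off their domain. -/
noncomputable def KrectCount (lam nu mu : Finset Box) : ℕ :=
  Set.ncard {f : Box → ℕ | (∀ b, b ∉ nu \ lam → f b = 0) ∧ IsIncTab (nu \ lam) f ∧
    ∃ g, Relation.ReflTransGen RectStep (lam, nu \ lam, f) (∅, mu, g) ∧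
      ∀ b ∈ mu, g b = sstd mu b}

/-- Apply a (forward or reverse) K-jdt slide, as specified by `mv`. -/
noncomputable def applyMove (st : Finset Box × Finset Box × (Box → ℕ))
    (mv : Bool × Finset Box) : Finset Box × Finset Box × (Box → ℕ) :=
  if mv.1 then doSlide st mv.2 else doRevSlide st mv.2

def ValidMove (st : Finset Box × Finset Box × (Box → ℕ)) (mv : Bool × Finset Box) : Prop :=
  mv.2.Nonempty ∧ (mv.1 = true → ∀ x ∈ mv.2, InnerCorner st.1 x) ∧
    (mv.1 = false → ∀ x ∈ mv.2, OuterCorner (st.1 ∪ st.2.1) x)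

noncomputable def applySeq (L : List (Bool × Finset Box))
    (st : Finset Box × Finset Box × (Box → ℕ)) : Finset Box × Finset Box × (Box → ℕ) :=
  L.foldl applyMove st

def ValidSeq : List (Bool × Finset Box) → (Finset Box × Finset Box × (Box → ℕ)) → Prop
  | [], _ => True
  | mv :: L, st => ValidMove st mv ∧ ValidSeq L (applyMove st mv)

/-- K-dual equivalence: every common sequence of (forward or reverse) slides
produces tableaux of the same shape. -/
def KDualEquiv (lam dom : Finset Box) (f g : Box → ℕ) : Prop :=
  ∀ L : List (Bool × Finset Box),
    ValidSeq L (lam, dom, f) → ValidSeq L (lam, dom, g) →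
    (applySeq L (lam, dom, f)).2.1 = (applySeq L (lam, dom, g)).2.1


/-! ### Auxiliary development for Statement 0 -/

/-- `a` is directly left of, or directly above, `b`. -/
def LA (a b : Box) : Prop :=
  (a.1 = b.1 ∧ a.2 + 1 = b.2) ∨ (a.2 = b.2 ∧ a.1 + 1 = b.1)

lemma adjB_iff (a b : Box) : adjB a b ↔ LA a b ∨ LA b a := by
  unfold adjB LA; omega

lemma adjB_irrefl (a : Box) : ¬ adjB a a := by
  unfold adjB; omega

lemma adjB_symm {a b : Box} (h : adjB a b) : adjB b a := by
  unfold adjB at *; omega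

/-- The invariant maintained through the stages of a K-jdt slide.  `U` is the
total region (dots together with the numerical region), `M` the maximal entry,
`i` the number of stages already processed.  A dot counts as the value `2i+1`
and an entry `v` as `2v`; this combined filling is strictly increasing. -/
structure KInv (U : Finset Box) (M i : ℕ)
    (st : Finset Box × Finset Box × (Box → ℕ)) : Prop where
  union : st.1 ∪ st.2.1 = U
  disj : ∀ b, b ∈ st.1 → b ∉ st.2.1
  pos : ∀ b ∈ st.2.1, 1 ≤ st.2.2 b
  lee : ∀ b ∈ st.2.1, st.2.2 b ≤ M
  surj : ∀ v, 1 ≤ v → v ≤ M → ∃ b ∈ st.2.1, st.2.2 b = v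
  incr : ∀ a b, a ∈ U → b ∈ U → LA a b →
    (if a ∈ st.1 then 2*i+1 else 2 * st.2.2 a) <
    (if b ∈ st.1 then 2*i+1 else 2 * st.2.2 b)

set_option maxHeartbeats 1000000 in
lemma KInv_step (U : Finset Box) (M i : ℕ) (st : Finset Box × Finset Box × (Box → ℕ))
    (h : KInv U M i st) (hiM : i < M) :
    KInv U M (i+1) (switchStep st (i+1)) := by
  obtain ⟨D, R, f⟩ := st
  set S : Finset Box := D ∪ R.filter (fun b => f b = i + 1) with hS
  set sw : Box → Prop := fun b => ∃ b' ∈ S, b' ≠ b ∧ conn S b b' with hsw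
  set D' : Finset Box :=
    R.filter (fun b => f b = i + 1 ∧ sw b) ∪ D.filter (fun b => ¬ sw b) with hD'
  set R' : Finset Box :=
    R.filter (fun b => ¬ (f b = i + 1 ∧ sw b)) ∪ D.filter sw with hR'
  set f' : Box → ℕ := fun b => if b ∈ D ∧ sw b then i + 1 else f b with hf'
  have hstep : switchStep (D, R, f) (i+1) = (D', R', f') := rfl
  rw [hstep]
  have hDU : ∀ x, x ∈ D → x ∈ U := fun x hx => h.union ▸ Finset.mem_union_left _ hx
  have hRU : ∀ x, x ∈ R → x ∈ U := fun x hx => h.union ▸ Finset.mem_union_right _ hx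
  have hRnD : ∀ x, x ∈ R → x ∉ D := fun x hx hxD => h.disj x hxD hx
  have hcases : ∀ x, x ∈ U → x ∈ D ∨ x ∈ R := by
    intro x hx; rw [← h.union] at hx; exact Finset.mem_union.1 hx
  have key : ∀ a b, a ∈ U → b ∈ U → LA a b →
      (if a ∈ D then 2*i+1 else 2 * f a) < (if b ∈ D then 2*i+1 else 2 * f b) := h.incr
  have jS : ∀ b, b ∈ R → f b = i + 1 → b ∈ S := fun b hb hfb =>
    Finset.mem_union_right _ (Finset.mem_filter.2 ⟨hb, hfb⟩)
  have dS : ∀ b, b ∈ D → b ∈ S := fun b hb => Finset.mem_union_left _ hb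
  have S_cases : ∀ b, b ∈ S → b ∈ D ∨ (b ∈ R ∧ f b = i + 1) := by
    intro b hb
    rcases Finset.mem_union.1 hb with h1 | h1
    · exact Or.inl h1
    · exact Or.inr (Finset.mem_filter.1 h1)
  have sw_iff : ∀ b, sw b ↔ (b ∈ S ∧ ∃ b' ∈ S, adjB b b') := by
    intro b
    constructor
    · rintro ⟨b', hb'S, hne, hconn⟩
      rcases Relation.ReflTransGen.cases_head hconn with rfl | ⟨c, ⟨hbS, hcS, hadj⟩, -⟩
      · exact absurd rfl hne
      · exact ⟨hbS, c, hcS, hadj⟩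
    · rintro ⟨hbS, b', hb'S, hadj⟩
      refine ⟨b', hb'S, ?_, Relation.ReflTransGen.single ⟨hbS, hb'S, hadj⟩⟩
      rintro rfl; exact adjB_irrefl _ hadj
  have no_dd : ∀ a b, a ∈ D → b ∈ D → ¬ adjB a b := by
    intro a b ha hb hadj
    rcases (adjB_iff a b).1 hadj with hla | hla
    · have := key a b (hDU a ha) (hDU b hb) hla
      rw [if_pos ha, if_pos hb] at this; omega
    · have := key b a (hDU b hb) (hDU a ha) hla
      rw [if_pos ha, if_pos hb] at this; omega
  have R_incr : ∀ a b, a ∈ R → b ∈ R → LA a b → f a < f b := by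
    intro a b ha hb hla
    have := key a b (hRU a ha) (hRU b hb) hla
    rw [if_neg (hRnD a ha), if_neg (hRnD b hb)] at this; omega
  have dot_right : ∀ d b, d ∈ D → b ∈ R → LA d b → i + 1 ≤ f b := by
    intro d b hd hb hla
    have := key d b (hDU d hd) (hRU b hb) hla
    rw [if_pos hd, if_neg (hRnD b hb)] at this; omega
  have dot_left : ∀ b d, b ∈ R → d ∈ D → LA b d → f b ≤ i := by
    intro b d hb hd hla
    have := key b d (hRU b hb) (hDU d hd) hla
    rw [if_neg (hRnD b hb), if_pos hd] at this; omega
  have memD' : ∀ x, x ∈ D' ↔ (x ∈ R ∧ f x = i + 1 ∧ sw x) ∨ (x ∈ D ∧ ¬ sw x) := by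
    intro x
    rw [hD', Finset.mem_union, Finset.mem_filter, Finset.mem_filter]
  have memR' : ∀ x, x ∈ R' ↔ (x ∈ R ∧ ¬ (f x = i + 1 ∧ sw x)) ∨ (x ∈ D ∧ sw x) := by
    intro x
    rw [hR', Finset.mem_union, Finset.mem_filter, Finset.mem_filter]
  have f'R : ∀ x, x ∉ D → f' x = f x := by
    intro x hx
    rw [hf']; dsimp only; rw [if_neg]; rintro ⟨hxD, -⟩; exact hx hxD
  have f'D : ∀ x, x ∈ D → sw x → f' x = i + 1 := by
    intro x hx hxsw
    rw [hf']; dsimp only; rw [if_pos ⟨hx, hxsw⟩]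
  constructor
  · -- union
    show D' ∪ R' = U
    rw [← h.union]
    ext x
    rw [Finset.mem_union, memD' x, memR' x, Finset.mem_union]
    constructor
    · rintro ((⟨hx, -⟩ | ⟨hx, -⟩) | (⟨hx, -⟩ | ⟨hx, -⟩))
      exacts [Or.inr hx, Or.inl hx, Or.inr hx, Or.inl hx]
    · intro hx
      rcases hx with hx | hx
      · by_cases hs : sw x
        · exact Or.inr (Or.inr ⟨hx, hs⟩)
        · exact Or.inl (Or.inr ⟨hx, hs⟩)
      · by_cases hj : f x = i + 1 ∧ sw x
        · exact Or.inl (Or.inl ⟨hx, hj⟩)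
        · exact Or.inr (Or.inl ⟨hx, hj⟩)
  · -- disjoint
    show ∀ b, b ∈ D' → b ∉ R'
    intro b hb hbR'
    rw [memD'] at hb; rw [memR'] at hbR'
    rcases hb with ⟨hbR, hbj⟩ | ⟨hbD, hbsw⟩
    · rcases hbR' with ⟨-, hneg⟩ | ⟨hbD, -⟩
      · exact hneg hbj
      · exact hRnD b hbR hbD
    · rcases hbR' with ⟨hbR, -⟩ | ⟨-, hsw'⟩
      · exact hRnD b hbR hbD
      · exact hbsw hsw'
  · -- pos
    show ∀ b ∈ R', 1 ≤ f' b
    intro b hb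
    rw [memR'] at hb
    rcases hb with ⟨hbR, -⟩ | ⟨hbD, hbsw⟩
    · show 1 ≤ f' b
      rw [f'R b (hRnD b hbR)]; exact h.pos b hbR
    · show 1 ≤ f' b
      rw [f'D b hbD hbsw]; omega
  · -- lee
    show ∀ b ∈ R', f' b ≤ M
    intro b hb
    rw [memR'] at hb
    rcases hb with ⟨hbR, -⟩ | ⟨hbD, hbsw⟩
    · show f' b ≤ M
      rw [f'R b (hRnD b hbR)]; exact h.lee b hbR
    · show f' b ≤ M
      rw [f'D b hbD hbsw]; omega
  · -- surj
    show ∀ v, 1 ≤ v → v ≤ M → ∃ b ∈ R', f' b = v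
    intro v hv1 hvM
    obtain ⟨b, hbR, hfb⟩ := h.surj v hv1 hvM
    have hfb' : f b = v := hfb
    by_cases hb : f b = i + 1 ∧ sw b
    · obtain ⟨hbS, b', hb'S, hadj⟩ := (sw_iff b).1 hb.2
      rcases S_cases b' hb'S with hb'D | ⟨hb'R, hfb'⟩
      · have hsw' : sw b' := (sw_iff b').2 ⟨dS b' hb'D, b, hbS, adjB_symm hadj⟩
        refine ⟨b', (memR' b').2 (Or.inr ⟨hb'D, hsw'⟩), ?_⟩
        show f' b' = v
        rw [f'D b' hb'D hsw']
        have := hb.1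
        omega
      · exfalso
        rcases (adjB_iff b b').1 hadj with hla | hla
        · have := R_incr b b' hbR hb'R hla; have := hb.1; omega
        · have := R_incr b' b hb'R hbR hla; have := hb.1; omega
    · refine ⟨b, (memR' b).2 (Or.inl ⟨hbR, hb⟩), ?_⟩
      show f' b = v
      rw [f'R b (hRnD b hbR)]; exact hfb'
  · -- incr
    show ∀ a b, a ∈ U → b ∈ U → LA a b →
      (if a ∈ D' then 2*(i+1)+1 else 2 * f' a) < (if b ∈ D' then 2*(i+1)+1 else 2 * f' b)
    intro a b haU hbU hla
    have hadj : adjB a b := (adjB_iff a b).2 (Or.inl hla)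
    rcases hcases a haU with haD | haR
    · rcases hcases b hbU with hbD | hbR
      · exact absurd hadj (no_dd a b haD hbD)
      · -- a dot, b entry
        by_cases hswa : sw a
        · have haD' : a ∉ D' := by
            rw [memD']; rintro (⟨haR, -⟩ | ⟨-, hn⟩)
            exacts [hRnD a haR haD, hn hswa]
          rw [if_neg haD', f'D a haD hswa]
          by_cases hbj : f b = i + 1 ∧ sw b
          · rw [if_pos ((memD' b).2 (Or.inl ⟨hbR, hbj⟩))]; omega
          · have hbD' : b ∉ D' := by
              rw [memD']; rintro (⟨-, h2⟩ | ⟨hbDD, -⟩)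
              exacts [hbj h2, hRnD b hbR hbDD]
            have hfbj : f b ≠ i + 1 := by
              intro hh
              exact hbj ⟨hh, (sw_iff b).2 ⟨jS b hbR hh, a, dS a haD, adjB_symm hadj⟩⟩
            have h1 := dot_right a b haD hbR hla
            rw [if_neg hbD', f'R b (hRnD b hbR)]; omega
        · by_cases hfbj : f b = i + 1
          · exact absurd ((sw_iff a).2 ⟨dS a haD, b, jS b hbR hfbj, hadj⟩) hswa
          · have haD' : a ∈ D' := (memD' a).2 (Or.inr ⟨haD, hswa⟩)
            have hbD' : b ∉ D' := by
              rw [memD']; rintro (⟨-, h2, -⟩ | ⟨hbDD, -⟩)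
              exacts [hfbj h2, hRnD b hbR hbDD]
            have h1 := dot_right a b haD hbR hla
            rw [if_pos haD', if_neg hbD', f'R b (hRnD b hbR)]; omega
    · rcases hcases b hbU with hbD | hbR
      · -- a entry, b dot
        have hfaj : f a ≤ i := dot_left a b haR hbD hla
        have haD' : a ∉ D' := by
          rw [memD']; rintro (⟨-, h2, hswaa⟩ | ⟨haDD, -⟩)
          · -- a is a sw (i+1)-box left/above a dot: impossible since f a ≤ i
            omega
          · exact hRnD a haR haDD
        rw [if_neg haD', f'R a (hRnD a haR)]
        by_cases hswb : sw b
        · have hbD' : b ∉ D' := by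
            rw [memD']; rintro (⟨hbRR, -⟩ | ⟨-, hn⟩)
            exacts [hRnD b hbRR hbD, hn hswb]
          rw [if_neg hbD', f'D b hbD hswb]; omega
        · rw [if_pos ((memD' b).2 (Or.inr ⟨hbD, hswb⟩))]; omega
      · -- both entries
        have hinc := R_incr a b haR hbR hla
        by_cases haj : f a = i + 1 ∧ sw a
        · have haD' : a ∈ D' := (memD' a).2 (Or.inl ⟨haR, haj⟩)
          rw [if_pos haD']
          by_cases hbj : f b = i + 1 ∧ sw b
          · exfalso; have := haj.1; have := hbj.1; omega
          · have hbD' : b ∉ D' := by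
              rw [memD']; rintro (⟨-, h2⟩ | ⟨hbDD, -⟩)
              exacts [hbj h2, hRnD b hbR hbDD]
            rw [if_neg hbD', f'R b (hRnD b hbR)]
            have := haj.1; omega
        · have haD' : a ∉ D' := by
            rw [memD']; rintro (⟨-, h2⟩ | ⟨haDD, -⟩)
            exacts [haj h2, hRnD a haR haDD]
          rw [if_neg haD', f'R a (hRnD a haR)]
          by_cases hbj : f b = i + 1 ∧ sw b
          · rw [if_pos ((memD' b).2 (Or.inl ⟨hbR, hbj⟩))]
            have := hbj.1; omega
          · have hbD' : b ∉ D' := by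
              rw [memD']; rintro (⟨-, h2⟩ | ⟨hbDD, -⟩)
              exacts [hbj h2, hRnD b hbR hbDD]
            rw [if_neg hbD', f'R b (hRnD b hbR)]; omega

lemma KInv_base (lam nu : Finset Box) (f : Box → ℕ) (xs : Finset Box)
    (hlam : IsYoung lam) (hsub : lam ⊆ nu)
    (hT : IsIncTab (nu \ lam) f) (hxs : ∀ x ∈ xs, InnerCorner lam x) :
    KInv (xs ∪ (nu \ lam)) (maxEntry (nu \ lam) f) 0 (xs, nu \ lam, f) := by
  have hxl : ∀ x, x ∈ xs → x ∈ lam := fun x hx => (hxs x hx).1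
  constructor
  · rfl
  · intro b hb hb'
    exact (Finset.mem_sdiff.1 hb').2 (hxl b hb)
  · exact hT.2.1
  · intro b hb; exact Finset.le_sup hb
  · exact hT.2.2
  · intro a b haU hbU hla
    obtain ⟨a1, a2⟩ := a
    obtain ⟨b1, b2⟩ := b
    simp only [LA] at hla
    show (if (a1, a2) ∈ xs then 2*0+1 else 2 * f (a1, a2)) <
      (if (b1, b2) ∈ xs then 2*0+1 else 2 * f (b1, b2))
    rcases Finset.mem_union.1 haU with haX | haR
    · rcases Finset.mem_union.1 hbU with hbX | hbR
      · exfalso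
        rcases hla with ⟨rfl, rfl⟩ | ⟨rfl, rfl⟩
        · exact (hxs _ haX).2.2 (hxl _ hbX)
        · exact (hxs _ haX).2.1 (hxl _ hbX)
      · have hbx : (b1, b2) ∉ xs := fun hbb => (Finset.mem_sdiff.1 hbR).2 (hxl _ hbb)
        have := hT.2.1 _ hbR
        rw [if_pos haX, if_neg hbx]; omega
    · have hax : (a1, a2) ∉ xs := fun haa => (Finset.mem_sdiff.1 haR).2 (hxl _ haa)
      rcases Finset.mem_union.1 hbU with hbX | hbR
      · exfalso
        apply (Finset.mem_sdiff.1 haR).2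
        rcases hla with ⟨rfl, rfl⟩ | ⟨rfl, rfl⟩
        · exact hlam.2 a1 a2 (hxl _ hbX)
        · exact hlam.1 a1 a2 (hxl _ hbX)
      · have hbx : (b1, b2) ∉ xs := fun hbb => (Finset.mem_sdiff.1 hbR).2 (hxl _ hbb)
        rw [if_neg hax, if_neg hbx]
        rcases hla with ⟨rfl, rfl⟩ | ⟨rfl, rfl⟩
        · have := hT.1.1 a1 a2 haR hbR; omega
        · have := hT.1.2 a1 a2 haR hbR; omega

lemma KState_succ (xs dom : Finset Box) (f : Box → ℕ) (m : ℕ) :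
    KState xs dom f (m+1) = switchStep (KState xs dom f m) (m+1) := by
  unfold KState
  rw [List.range_succ, List.foldl_append]
  rfl

lemma KInv_all (lam nu : Finset Box) (f : Box → ℕ) (xs : Finset Box)
    (hlam : IsYoung lam) (hsub : lam ⊆ nu)
    (hT : IsIncTab (nu \ lam) f) (hxs : ∀ x ∈ xs, InnerCorner lam x) :
    ∀ m, m ≤ maxEntry (nu \ lam) f →
      KInv (xs ∪ (nu \ lam)) (maxEntry (nu \ lam) f) m (KState xs (nu \ lam) f m) := by
  intro m
  induction m with
  | zero =>
      intro _
      exact KInv_base lam nu f xs hlam hsub hT hxs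
  | succ n ih =>
      intro hm
      rw [KState_succ]
      exact KInv_step _ _ _ _ (ih (by omega)) (by omega)

lemma final_assembly (lam nu : Finset Box) (xs : Finset Box) (M : ℕ)
    (hlam : IsYoung lam) (hnu : IsYoung nu) (hsub : lam ⊆ nu)
    (hxs : ∀ x ∈ xs, InnerCorner lam x)
    (D R : Finset Box) (g : Box → ℕ)
    (hinv : KInv (xs ∪ (nu \ lam)) M M (D, R, g)) :
    ∃ lam' nu' : Finset Box, IsYoung lam' ∧ IsYoung nu' ∧ lam' ⊆ nu' ∧
      R = nu' \ lam' ∧ IsIncTab R g := by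
  have hunion : D ∪ R = xs ∪ (nu \ lam) := hinv.union
  have hdisj : ∀ b, b ∈ D → b ∉ R := hinv.disj
  have hpos : ∀ b ∈ R, 1 ≤ g b := hinv.pos
  have hlee : ∀ b ∈ R, g b ≤ M := hinv.lee
  have hsurj : ∀ v, 1 ≤ v → v ≤ M → ∃ b ∈ R, g b = v := hinv.surj
  have hincr : ∀ a b, a ∈ xs ∪ (nu \ lam) → b ∈ xs ∪ (nu \ lam) → LA a b →
      (if a ∈ D then 2*M+1 else 2 * g a) < (if b ∈ D then 2*M+1 else 2 * g b) := hinv.incr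
  have hDU : ∀ x, x ∈ D → x ∈ xs ∪ (nu \ lam) :=
    fun x hx => hunion ▸ Finset.mem_union_left _ hx
  have hRU : ∀ x, x ∈ R → x ∈ xs ∪ (nu \ lam) :=
    fun x hx => hunion ▸ Finset.mem_union_right _ hx
  have hRnD : ∀ x, x ∈ R → x ∉ D := fun x hx hxD => hdisj x hxD hx
  have hxl : ∀ x, x ∈ xs → x ∈ lam := fun x hx => (hxs x hx).1
  -- dots are closed under moving southeast within nu
  have no_below : ∀ r c : ℕ, (r, c) ∈ D → (r+1, c) ∈ nu → (r+1, c) ∈ D := by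
    intro r c hd hb
    by_contra hbD
    have hbnl : (r+1, c) ∉ lam := by
      intro hbl
      have hdu := hDU _ hd
      rcases Finset.mem_union.1 hdu with h1 | h1
      · exact (hxs _ h1).2.1 hbl
      · exact (Finset.mem_sdiff.1 h1).2 (hlam.1 r c hbl)
    have hbU : (r+1, c) ∈ xs ∪ (nu \ lam) :=
      Finset.mem_union_right _ (Finset.mem_sdiff.2 ⟨hb, hbnl⟩)
    have hbR : (r+1, c) ∈ R := by
      rw [← hunion] at hbU
      rcases Finset.mem_union.1 hbU with h1 | h1
      · exact absurd h1 hbD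
      · exact h1
    have hk := hincr (r, c) (r+1, c) (hDU _ hd) hbU (Or.inr ⟨rfl, rfl⟩)
    rw [if_pos hd, if_neg (hRnD _ hbR)] at hk
    have := hlee _ hbR
    omega
  have no_right : ∀ r c : ℕ, (r, c) ∈ D → (r, c+1) ∈ nu → (r, c+1) ∈ D := by
    intro r c hd hb
    by_contra hbD
    have hbnl : (r, c+1) ∉ lam := by
      intro hbl
      have hdu := hDU _ hd
      rcases Finset.mem_union.1 hdu with h1 | h1
      · exact (hxs _ h1).2.2 hbl
      · exact (Finset.mem_sdiff.1 h1).2 (hlam.2 r c hbl)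
    have hbU : (r, c+1) ∈ xs ∪ (nu \ lam) :=
      Finset.mem_union_right _ (Finset.mem_sdiff.2 ⟨hb, hbnl⟩)
    have hbR : (r, c+1) ∈ R := by
      rw [← hunion] at hbU
      rcases Finset.mem_union.1 hbU with h1 | h1
      · exact absurd h1 hbD
      · exact h1
    have hk := hincr (r, c) (r, c+1) (hDU _ hd) hbU (Or.inl ⟨rfl, rfl⟩)
    rw [if_pos hd, if_neg (hRnD _ hbR)] at hk
    have := hlee _ hbR
    omega
  refine ⟨lam \ xs, nu \ D, ?_, ?_, ?_, ?_, ?_⟩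
  · -- IsYoung (lam \ xs)
    constructor
    · intro r c hmem
      rw [Finset.mem_sdiff] at hmem ⊢
      refine ⟨hlam.1 r c hmem.1, fun hx => ?_⟩
      exact (hxs (r, c) hx).2.1 hmem.1
    · intro r c hmem
      rw [Finset.mem_sdiff] at hmem ⊢
      refine ⟨hlam.2 r c hmem.1, fun hx => ?_⟩
      exact (hxs (r, c) hx).2.2 hmem.1
  · -- IsYoung (nu \ D)
    constructor
    · intro r c hmem
      rw [Finset.mem_sdiff] at hmem ⊢
      exact ⟨hnu.1 r c hmem.1, fun hD => hmem.2 (no_below r c hD hmem.1)⟩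
    · intro r c hmem
      rw [Finset.mem_sdiff] at hmem ⊢
      exact ⟨hnu.2 r c hmem.1, fun hD => hmem.2 (no_right r c hD hmem.1)⟩
  · -- lam \ xs ⊆ nu \ D
    intro x hx
    rw [Finset.mem_sdiff] at hx ⊢
    refine ⟨hsub hx.1, fun hxD => ?_⟩
    rcases Finset.mem_union.1 (hDU x hxD) with h1 | h1
    · exact hx.2 h1
    · exact (Finset.mem_sdiff.1 h1).2 hx.1
  · -- shape of the result
    ext x
    rw [Finset.mem_sdiff, Finset.mem_sdiff, Finset.mem_sdiff]
    constructor
    · intro hxR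
      have hxU := hRU x hxR
      have hxnD := hRnD x hxR
      refine ⟨⟨?_, hxnD⟩, ?_⟩
      · rcases Finset.mem_union.1 hxU with h1 | h1
        · exact hsub (hxl x h1)
        · exact (Finset.mem_sdiff.1 h1).1
      · rintro ⟨hxlam, hxnxs⟩
        rcases Finset.mem_union.1 hxU with h1 | h1
        · exact hxnxs h1
        · exact (Finset.mem_sdiff.1 h1).2 hxlam
    · rintro ⟨⟨hxnu, hxnD⟩, hxn⟩
      have hxU : x ∈ xs ∪ (nu \ lam) := by
        by_cases hxlam : x ∈ lam
        · refine Finset.mem_union_left _ ?_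
          by_contra hxxs
          exact hxn ⟨hxlam, hxxs⟩
        · exact Finset.mem_union_right _ (Finset.mem_sdiff.2 ⟨hxnu, hxlam⟩)
      rw [← hunion] at hxU
      rcases Finset.mem_union.1 hxU with h1 | h1
      · exact absurd h1 hxnD
      · exact h1
  · -- IsIncTab R g
    refine ⟨⟨?_, ?_⟩, hpos, ?_⟩
    · intro r c h1 h2
      have hk := hincr (r, c) (r, c+1) (hRU _ h1) (hRU _ h2) (Or.inl ⟨rfl, rfl⟩)
      rw [if_neg (hRnD _ h1), if_neg (hRnD _ h2)] at hk
      omega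
    · intro r c h1 h2
      have hk := hincr (r, c) (r+1, c) (hRU _ h1) (hRU _ h2) (Or.inr ⟨rfl, rfl⟩)
      rw [if_neg (hRnD _ h1), if_neg (hRnD _ h2)] at hk
      omega
    · intro v hv1 hv2
      have hM : maxEntry R g ≤ M := Finset.sup_le fun b hb => hlee b hb
      exact hsurj v hv1 (le_trans hv2 hM)

/-- a K-jdt slide of an increasing tableau of skew shape `ν/λ`
into a set of inner corners of `λ` is again an increasing tableau (of some
skew shape). -/
theorem stmt0 (lam nu : Finset Box) (f : Box → ℕ) (xs : Finset Box)
    (hlam : IsYoung lam) (hnu : IsYoung nu) (hsub : lam ⊆ nu)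
    (hT : IsIncTab (nu \ lam) f) (hxs : ∀ x ∈ xs, InnerCorner lam x) :
    ∃ lam' nu' : Finset Box, IsYoung lam' ∧ IsYoung nu' ∧ lam' ⊆ nu' ∧
      (KJdt xs (nu \ lam) f).1 = nu' \ lam' ∧
      IsIncTab (KJdt xs (nu \ lam) f).1 (KJdt xs (nu \ lam) f).2 := by
  have hinv := KInv_all lam nu f xs hlam hsub hT hxs (maxEntry (nu \ lam) f) le_rfl
  obtain ⟨lam', nu', h1, h2, h3, h4, h5⟩ :=
    final_assembly lam nu xs (maxEntry (nu \ lam) f) hlam hnu hsub hxs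
      (KState xs (nu \ lam) f (maxEntry (nu \ lam) f)).1
      (KState xs (nu \ lam) f (maxEntry (nu \ lam) f)).2.1
      (KState xs (nu \ lam) f (maxEntry (nu \ lam) f)).2.2 hinv
  exact ⟨lam', nu', h1, h2, h3, h4, h5⟩
end

section
/- Any K-jdt slide applied to a t-Pieri filling results in a t-Pieri filling. -/
open Finset
open scoped Classical

namespace Stmt10

lemma adjB_ne {a b : Box} (h : adjB a b) : a ≠ b := by
  rintro rfl; rcases h with ⟨_, h | h⟩ | ⟨_, h | h⟩ <;> omega

lemma adjB_symm {a b : Box} (h : adjB a b) : adjB b a := by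
  rcases h with ⟨h1, h2⟩ | ⟨h1, h2⟩
  · exact Or.inl ⟨h1.symm, h2.symm⟩
  · exact Or.inr ⟨h1.symm, h2.symm⟩

/-- The `sw` predicate of `switchStep` simplifies to "has a neighbour in S". -/
lemma sw_iff (S : Finset Box) (b : Box) :
    (∃ b' ∈ S, b' ≠ b ∧ conn S b b') ↔ (b ∈ S ∧ ∃ b' ∈ S, adjB b b') := by
  constructor
  · rintro ⟨b', hb', hne, hconn⟩
    rcases (Relation.reflTransGen_iff_eq_or_transGen.mp hconn) with rfl | htg
    · exact absurd rfl hne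
    · rcases (Relation.TransGen.head'_iff.mp htg) with ⟨c, ⟨hbS, hcS, hadj⟩, _⟩
      exact ⟨hbS, c, hcS, hadj⟩
  · rintro ⟨hbS, b', hb'S, hadj⟩
    exact ⟨b', hb'S, (adjB_ne hadj).symm,
      Relation.ReflTransGen.single ⟨hbS, hb'S, hadj⟩⟩

/-- Unfolded form of `switchStep`. -/
lemma switchStep_def (D dm : Finset Box) (g : Box → ℕ) (i : ℕ) :
    switchStep (D, dm, g) i =
      (dm.filter (fun b => g b = i ∧
          (b ∈ (D ∪ dm.filter (fun c => g c = i)) ∧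
            ∃ b' ∈ (D ∪ dm.filter (fun c => g c = i)), adjB b b')) ∪
        D.filter (fun b => ¬ (b ∈ (D ∪ dm.filter (fun c => g c = i)) ∧
            ∃ b' ∈ (D ∪ dm.filter (fun c => g c = i)), adjB b b')),
       dm.filter (fun b => ¬ (g b = i ∧
          (b ∈ (D ∪ dm.filter (fun c => g c = i)) ∧
            ∃ b' ∈ (D ∪ dm.filter (fun c => g c = i)), adjB b b'))) ∪
        D.filter (fun b => (b ∈ (D ∪ dm.filter (fun c => g c = i)) ∧
            ∃ b' ∈ (D ∪ dm.filter (fun c => g c = i)), adjB b b')),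
       fun b => if (b ∈ D ∧ (b ∈ (D ∪ dm.filter (fun c => g c = i)) ∧
            ∃ b' ∈ (D ∪ dm.filter (fun c => g c = i)), adjB b b')) then i else g b) := by
  show (_, _, _) = _
  have hsw : ∀ b : Box, (∃ b' ∈ (D ∪ dm.filter (fun c => g c = i)), b' ≠ b ∧
      conn (D ∪ dm.filter (fun c => g c = i)) b b') ↔
      (b ∈ (D ∪ dm.filter (fun c => g c = i)) ∧
        ∃ b' ∈ (D ∪ dm.filter (fun c => g c = i)), adjB b b') :=
    fun b => sw_iff _ b
  refine Prod.ext ?_ (Prod.ext ?_ ?_)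
  · simp only [switchStep]
    congr 1
    · exact Finset.filter_congr (fun b _ => by rw [hsw b])
    · exact Finset.filter_congr (fun b _ => by rw [hsw b])
  · simp only [switchStep]
    congr 1
    · exact Finset.filter_congr (fun b _ => by rw [hsw b])
    · exact Finset.filter_congr (fun b _ => by rw [hsw b])
  · simp only [switchStep]
    funext b
    by_cases hb : b ∈ D
    · simp only [hb, true_and]
      exact if_congr (hsw b) rfl rfl
    · simp only [hb, false_and, if_false]

lemma KState_succ (xs dom : Finset Box) (f : Box → ℕ) (m : ℕ) :
    KState xs dom f (m + 1) = switchStep (KState xs dom f m) (m + 1) := by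
  unfold KState
  rw [List.range_succ, List.foldl_append, List.foldl_cons, List.foldl_nil]

lemma KState_zero (xs dom : Finset Box) (f : Box → ℕ) :
    KState xs dom f 0 = (xs, dom, f) := rfl

end Stmt10
namespace Stmt10

section Geom

variable {lam nu xs : Finset Box}

lemma young_row {μ : Finset Box} (h : IsYoung μ) {r c c' : ℕ}
    (hm : (r, c) ∈ μ) (hc : c' ≤ c) : (r, c') ∈ μ := by
  obtain ⟨k, rfl⟩ := Nat.le.dest hc
  induction k with
  | zero => simpa using hm
  | succ n ih =>
      exact ih (h.2 r (c' + n) (by rw [show c' + n + 1 = c' + (n+1) by ring]; exact hm))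
        (by omega)

lemma young_col {μ : Finset Box} (h : IsYoung μ) {r r' c : ℕ}
    (hm : (r, c) ∈ μ) (hr : r' ≤ r) : (r', c) ∈ μ := by
  obtain ⟨k, rfl⟩ := Nat.le.dest hr
  induction k with
  | zero => simpa using hm
  | succ n ih =>
      exact ih (h.1 (r' + n) c (by rw [show r' + n + 1 = r' + (n+1) by ring]; exact hm))
        (by omega)

variable (hlam : IsYoung lam) (hstrip : HorizontalStrip (nu \ lam))
variable (hnu : IsYoung nu)
variable (hxsc : ∀ x ∈ xs, InnerCorner lam x)

include hlam hnu in
/-- Rows of the strip are intervals. -/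
lemma strip_interval {r c c' c'' : ℕ} (h1 : (r, c) ∈ nu \ lam)
    (h2 : (r, c'') ∈ nu \ lam) (hle : c ≤ c') (hle' : c' ≤ c'') :
    (r, c') ∈ nu \ lam := by
  refine Finset.mem_sdiff.mpr ⟨young_row hnu (Finset.mem_sdiff.mp h2).1 hle', ?_⟩
  intro hl
  exact (Finset.mem_sdiff.mp h1).2 (young_row hlam hl hle)

set_option linter.unusedSectionVars false
include hlam hstrip hnu hxsc

/-- In `U = (ν∖λ) ∪ xs` there is no cell strictly left of an `xs`-cell in its row. -/
lemma xs_no_left {r c c' : ℕ} (hx : (r, c) ∈ xs) (hU : (r, c') ∈ (nu \ lam) ∪ xs)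
    (hlt : c' < c) : False := by
  obtain ⟨hxl, _, _⟩ := hxsc _ hx
  rcases Finset.mem_union.mp hU with hU | hU
  · exact (Finset.mem_sdiff.mp hU).2 (young_row hlam hxl (by omega))
  · obtain ⟨_, _, hc1⟩ := hxsc _ hU
    exact hc1 (young_row hlam hxl (by omega))

/-- In `U` there is no cell strictly above an `xs`-cell in its column. -/
lemma xs_no_above {r r' c : ℕ} (hx : (r, c) ∈ xs) (hU : (r', c) ∈ (nu \ lam) ∪ xs)
    (hlt : r' < r) : False := by
  obtain ⟨hxl, _, _⟩ := hxsc _ hx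
  rcases Finset.mem_union.mp hU with hU | hU
  · exact (Finset.mem_sdiff.mp hU).2 (young_col hlam hxl (by omega))
  · obtain ⟨_, hc1, _⟩ := hxsc _ hU
    exact hc1 (young_col hlam hxl (by omega))

/-- No cell of `U` directly below a strip cell. -/
lemma strip_no_below {r c : ℕ} (hs : (r, c) ∈ nu \ lam)
    (hU : (r + 1, c) ∈ (nu \ lam) ∪ xs) : False := by
  rcases Finset.mem_union.mp hU with hU | hU
  · exact (hstrip _ hs _ hU (by simp [Prod.ext_iff])) rfl
  · exact (Finset.mem_sdiff.mp hs).2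
      (young_col hlam ((hxsc _ hU).1) (by omega))

/-- A `U`-cell right-adjacent to a strip cell is a strip cell. -/
lemma strip_right_strip {r c : ℕ} (hs : (r, c) ∈ nu \ lam)
    (hU : (r, c + 1) ∈ (nu \ lam) ∪ xs) : (r, c + 1) ∈ nu \ lam := by
  rcases Finset.mem_union.mp hU with hU | hU
  · exact hU
  · exact absurd (young_row hlam ((hxsc _ hU).1) (by omega))
      (Finset.mem_sdiff.mp hs).2

/-- A `U`-cell directly above a strip cell is an `xs`-cell. -/
lemma strip_above_xs {r c : ℕ} (hs : (r + 1, c) ∈ nu \ lam)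
    (hU : (r, c) ∈ (nu \ lam) ∪ xs) : (r, c) ∈ xs := by
  rcases Finset.mem_union.mp hU with hU | hU
  · exact absurd (hstrip _ hU _ hs (by simp)) (by simp)
  · exact hU

/-- Strip cells in the same column coincide (rows are equal). -/
lemma strip_col {r r' c : ℕ} (h1 : (r, c) ∈ nu \ lam) (h2 : (r', c) ∈ nu \ lam) :
    r = r' := by
  by_contra hne
  exact (hstrip _ h1 _ h2 (by simp [Prod.ext_iff]; omega)) rfl

/-- A strip cell below an `xs`-cell in the same column is directly below it. -/
lemma xs_below_adj {r r' c : ℕ} (hx : (r, c) ∈ xs) (hs : (r', c) ∈ nu \ lam)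
    (hlt : r < r') : r' = r + 1 := by
  obtain ⟨hxl, hc1, _⟩ := hxsc _ hx
  have h1 : (r + 1, c) ∈ nu := young_col hnu (Finset.mem_sdiff.mp hs).1 (by omega)
  have : (r + 1, c) ∈ nu \ lam := Finset.mem_sdiff.mpr ⟨h1, hc1⟩
  exact (strip_col hlam hstrip hnu hxsc this hs).symm

/-- The "rightmost" geometry: a strip cell below an `xs`-cell is rightmost;
nothing of `U` to its right. -/
lemma twocol_bottom_rightmost {r c : ℕ} (hx : (r, c) ∈ xs)
    (hs : (r + 1, c) ∈ nu \ lam) (hU : (r + 1, c + 1) ∈ (nu \ lam) ∪ xs) : False := by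
  rcases Finset.mem_union.mp hU with hU | hU
  · obtain ⟨hxl, _, hc2⟩ := hxsc _ hx
    have h1 : (r, c + 1) ∈ nu := young_col hnu (Finset.mem_sdiff.mp hU).1 (by omega)
    have h2 : (r, c + 1) ∈ nu \ lam := Finset.mem_sdiff.mpr ⟨h1, hc2⟩
    exact absurd (strip_col hlam hstrip hnu hxsc h2 hU) (by omega)
  · exact xs_no_left hlam hstrip hnu hxsc hU (Finset.mem_union_left _ hs) (by omega)

/-- Distinct `xs` cells are never adjacent. -/
lemma xs_nonadj {a b : Box} (ha : a ∈ xs) (hb : b ∈ xs) (hadj : adjB a b) : False := by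
  obtain ⟨ar, ac⟩ := a
  obtain ⟨br, bc⟩ := b
  obtain ⟨hal, ha1, ha2⟩ := hxsc _ ha
  obtain ⟨hbl, hb1, hb2⟩ := hxsc _ hb
  simp only at hal ha1 ha2 hbl hb1 hb2
  rcases hadj with ⟨h1, h2 | h2⟩ | ⟨h1, h2 | h2⟩ <;> simp only at h1 h2
  · apply ha2; rw [show ar = br from h1, show ac + 1 = bc from h2]; exact hbl
  · apply hb2; rw [show br = ar from h1.symm, show bc + 1 = ac from h2]; exact hal
  · apply ha1; rw [show ar + 1 = br from h2, show ac = bc from h1]; exact hbl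
  · apply hb1; rw [show br + 1 = ar from h2, show bc = ac from h1.symm]; exact hal

end Geom

end Stmt10
namespace Stmt10

section PieriStruct

set_option linter.unusedSectionVars false

variable {lam nu : Finset Box} {f : Box → ℕ} {t : ℕ}
variable (hlam : IsYoung lam) (hnu : IsYoung nu)
variable (hP : IsPieri (nu \ lam) f t)

lemma exists_leftmost {dom : Finset Box} {r c : ℕ} (h : (r, c) ∈ dom) :
    ∃ c0, c0 ≤ c ∧ LeftmostIn dom r c0 := by
  have hex : ∃ c', (r, c') ∈ dom := ⟨c, h⟩
  refine ⟨Nat.find hex, Nat.find_min' hex h, Nat.find_spec hex,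
    fun c' hc' => Nat.find_min hex hc'⟩

lemma exists_rightmost {dom : Finset Box} {r c : ℕ} (h : (r, c) ∈ dom) :
    ∃ c1, c ≤ c1 ∧ RightmostIn dom r c1 := by
  set M := (dom.filter (fun b => b.1 = r)).image Prod.snd with hM
  have hmm : ∀ c', (r, c') ∈ dom → c' ∈ M := fun c' h' =>
    Finset.mem_image.mpr ⟨(r, c'), Finset.mem_filter.mpr ⟨h', rfl⟩, rfl⟩
  have hne : M.Nonempty := ⟨c, hmm c h⟩
  refine ⟨M.max' hne, Finset.le_max' M c (hmm c h), ?_, ?_⟩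
  · obtain ⟨b, hb, hb2⟩ := Finset.mem_image.mp (M.max'_mem hne)
    obtain ⟨hb3, hb4⟩ := Finset.mem_filter.mp hb
    have : b = (r, M.max' hne) := by
      obtain ⟨b1, b2⟩ := b; simp only at hb2 hb4; rw [hb2, hb4]
    rwa [this] at hb3
  · intro c' hc' hmem
    have := Finset.le_max' M c' (hmm c' hmem)
    omega

include hlam hnu hP

/-- Entries along a strip row increase by exactly one per step. -/
lemma row_chain {r c k : ℕ} (h1 : (r, c) ∈ nu \ lam) (h2 : (r, c + k) ∈ nu \ lam) :
    f (r, c + k) = f (r, c) + k := by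
  induction k with
  | zero => simp
  | succ n ih =>
      have hmem : (r, c + n) ∈ nu \ lam :=
        strip_interval hlam hnu h1 h2 (by omega) (by omega)
      have := hP.2.1 r (c + n) hmem (by rw [show c + n + 1 = c + (n+1) by ring]; exact h2)
      rw [show c + (n + 1) = c + n + 1 by ring, this, ih hmem]
      ring

lemma row_le {r c c' : ℕ} (h1 : (r, c) ∈ nu \ lam) (h2 : (r, c') ∈ nu \ lam)
    (hle : c ≤ c') : f (r, c) ≤ f (r, c') := by
  have := row_chain hlam hnu hP (k := c' - c) h1
    (by rw [show c + (c' - c) = c' by omega]; exact h2)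
  rw [show c + (c' - c) = c' by omega] at this
  omega

/-- Climbing rows: the rightmost entry of a lower row is at most the leftmost
entry of a higher row. -/
lemma climb : ∀ k r r' cL cR, r < r' → r' - r ≤ k →
    LeftmostIn (nu \ lam) r cL → RightmostIn (nu \ lam) r' cR →
    f (r', cR) ≤ f (r, cL) := by
  intro k
  induction k with
  | zero => intro r r' _ _ h1 h2; omega
  | succ n ih =>
      intro r r' cL cR hlt hle hL hR
      have hex : ∃ j, ∃ c', (r + 1 + j, c') ∈ nu \ lam := ⟨r' - r - 1, cR, by
        rw [show r + 1 + (r' - r - 1) = r' by omega]; exact hR.1⟩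
      set j0 := Nat.find hex with hj0
      obtain ⟨c2, hc2⟩ := Nat.find_spec hex
      set r2 := r + 1 + j0 with hr2
      obtain ⟨cR2, hcR2le, hR2⟩ := exists_rightmost hc2
      have hnob : ∀ b ∈ nu \ lam, ¬(r < b.1 ∧ b.1 < r2) := by
        rintro ⟨br, bc⟩ hb ⟨hb1, hb2⟩
        exact Nat.find_min hex (m := br - r - 1) (by omega) ⟨bc, by
          rw [show r + 1 + (br - r - 1) = br by omega]; exact hb⟩
      have hr2le : r2 ≤ r' := by
        by_contra hgt
        exact hnob _ hR.1 ⟨by omega, by omega⟩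
      have hlink := hP.2.2.2.1 r cL r2 cR2 hL hR2 (by omega) hnob
      have h1 : f (r2, cR2) ≤ f (r, cL) := by rcases hlink with h | h <;> omega
      rcases eq_or_lt_of_le hr2le with heq | hlt2
      · have hcc : cR = cR2 := by
          subst heq
          rcases Nat.lt_trichotomy cR cR2 with h | h | h
          · exact absurd (hR.2 cR2 h hR2.1) not_false
          · exact h
          · exact absurd (hR2.2 cR h hR.1) not_false
        subst heq; rw [hcc]; exact h1
      · obtain ⟨cL2, hcL2le, hL2⟩ := exists_leftmost hc2
        have h2 : f (r', cR) ≤ f (r2, cL2) := ih r2 r' cL2 cR hlt2 (by omega) hL2 hR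
        have h3 : f (r2, cL2) ≤ f (r2, cR2) := by
          have hle2 : cL2 ≤ cR2 := by
            by_contra hgt
            exact hR2.2 cL2 (by omega) hL2.1
          exact row_le hlam hnu hP hL2.1 hR2.1 hle2
        omega

/-- Reading-order monotonicity for a Pieri filling. -/
lemma pieri_mono {a b : Box} (ha : a ∈ nu \ lam) (hb : b ∈ nu \ lam)
    (hr : ReadBefore a b) : f a ≤ f b := by
  obtain ⟨ar, ac⟩ := a
  obtain ⟨br, bc⟩ := b
  rcases hr with hlt | ⟨heq, hlt⟩
  · simp only at hlt
    obtain ⟨cR, hcRle, hR⟩ := exists_rightmost ha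
    obtain ⟨cL, hcLle, hL⟩ := exists_leftmost hb
    have h1 : f (ar, ac) ≤ f (ar, cR) := row_le hlam hnu hP ha hR.1 hcRle
    have h2 : f (ar, cR) ≤ f (br, cL) := climb hlam hnu hP (ar - br) br ar cL cR hlt
      (by omega) hL hR
    have h3 : f (br, cL) ≤ f (br, bc) := row_le hlam hnu hP hL.1 hb hcLle
    omega
  · simp only at heq hlt
    subst heq
    exact row_le hlam hnu hP ha hb (by omega)

/-- All values `1,…,t` are attained by a Pieri filling. -/
lemma pieri_attain (hne : (nu \ lam).Nonempty) :
    ∀ v, 1 ≤ v → v ≤ t → ∃ b ∈ nu \ lam, f b = v := by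
  set R0 := ((nu \ lam).image Prod.fst).max' (hne.image _) with hR0
  have hrow_le : ∀ b ∈ nu \ lam, b.1 ≤ R0 :=
    fun b hb => Finset.le_max' _ _ (Finset.mem_image.mpr ⟨b, hb, rfl⟩)
  have step : ∀ k, ∀ zr zc : ℕ, (zr, zc) ∈ nu \ lam → ∀ v, 1 ≤ v → f (zr, zc) = v + 1 →
      R0 - zr ≤ k → ∃ b ∈ nu \ lam, f b = v := by
    intro k
    induction k with
    | zero =>
        intro zr zc hz v hv hfz hk
        obtain ⟨cL, hcLle, hL⟩ := exists_leftmost hz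
        rcases Nat.lt_or_ge cL zc with hlt | hge
        · refine ⟨(zr, zc - 1), strip_interval hlam hnu hL.1 hz (by omega) (by omega), ?_⟩
          have := hP.2.1 zr (zc - 1) (strip_interval hlam hnu hL.1 hz (by omega) (by omega))
            (by rw [show zc - 1 + 1 = zc by omega]; exact hz)
          rw [show zc - 1 + 1 = zc by omega] at this
          omega
        · have hzc : zc = cL := by omega
          have hbot : ∀ b ∈ nu \ lam, b.1 ≤ zr := by
            intro b hb
            have h1 := hrow_le b hb
            omega
          have := hP.2.2.1 zr cL hL hbot
          rw [hzc] at hfz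
          omega
    | succ n ih =>
        intro zr zc hz v hv hfz hk
        obtain ⟨cL, hcLle, hL⟩ := exists_leftmost hz
        rcases Nat.lt_or_ge cL zc with hlt | hge
        · refine ⟨(zr, zc - 1), strip_interval hlam hnu hL.1 hz (by omega) (by omega), ?_⟩
          have := hP.2.1 zr (zc - 1) (strip_interval hlam hnu hL.1 hz (by omega) (by omega))
            (by rw [show zc - 1 + 1 = zc by omega]; exact hz)
          rw [show zc - 1 + 1 = zc by omega] at this
          omega
        · have hzc : zc = cL := by omega
          by_cases hbot : ∀ b ∈ nu \ lam, b.1 ≤ zr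
          · have := hP.2.2.1 zr cL hL hbot
            rw [hzc] at hfz
            omega
          · push_neg at hbot
            obtain ⟨w, hw, hwgt⟩ := hbot
            have hex : ∃ j, ∃ c', (zr + 1 + j, c') ∈ nu \ lam :=
              ⟨w.1 - zr - 1, w.2, by
                rw [show zr + 1 + (w.1 - zr - 1) = w.1 by omega]
                exact (show ((w.1 : ℕ), (w.2 : ℕ)) = w from rfl) ▸ hw⟩
            set j0 := Nat.find hex with hj0
            obtain ⟨c2, hc2⟩ := Nat.find_spec hex
            set r2 := zr + 1 + j0 with hr2
            obtain ⟨cR2, hcR2le, hR2⟩ := exists_rightmost hc2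
            have hnob : ∀ b ∈ nu \ lam, ¬(zr < b.1 ∧ b.1 < r2) := by
              rintro ⟨br, bc⟩ hb ⟨hb1, hb2⟩
              exact Nat.find_min hex (m := br - zr - 1) (by omega) ⟨bc, by
                rw [show zr + 1 + (br - zr - 1) = br by omega]; exact hb⟩
            have hlink := hP.2.2.2.1 zr cL r2 cR2 (hzc ▸ hL) hR2 (by omega) hnob
            rw [hzc] at hfz
            have hr2R0 : r2 ≤ R0 := hrow_le _ hR2.1
            rcases hlink with h | h
            · exact ih r2 cR2 hR2.1 v hv (by omega) (by omega)
            · exact ⟨(r2, cR2), hR2.1, by omega⟩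
  intro v hv hvt
  obtain ⟨b0, hb0, hfb0⟩ := hP.2.2.2.2.2 hne
  have main : ∀ d, ∀ v', 1 ≤ v' → v' + d = t → ∃ b ∈ nu \ lam, f b = v' := by
    intro d
    induction d with
    | zero => intro v' _ hvt'; exact ⟨b0, hb0, by omega⟩
    | succ n ih =>
        intro v' hv' hvt'
        obtain ⟨z, hz, hfz⟩ := ih (v' + 1) (by omega) (by omega)
        exact step R0 z.1 z.2 (by rwa [show ((z.1 : ℕ), (z.2 : ℕ)) = z from rfl]) v' hv'
          (by rwa [show ((z.1 : ℕ), (z.2 : ℕ)) = z from rfl]) (by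
            have := hrow_le z hz; omega)
  exact main (t - v) v hv (by omega)

end PieriStruct

end Stmt10
namespace Stmt10

section Invariant

set_option linter.unusedSectionVars false
set_option maxHeartbeats 1000000

variable {lam nu xs : Finset Box} {f : Box → ℕ} {t : ℕ}
variable (hlam : IsYoung lam) (hnu : IsYoung nu) (hsub : lam ⊆ nu)
variable (hstrip : HorizontalStrip (nu \ lam))
variable (hxsc : ∀ x ∈ xs, InnerCorner lam x)

/-- The invariant maintained through the stages of a K-jdt slide on a Pieri
filling.  `D` are the current •'s, `dm` the numerical boxes, `g` the entries,
`i` the number of stages already processed. -/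
structure Inv (xs lam nu : Finset Box) (t i : ℕ)
    (D dm : Finset Box) (g : Box → ℕ) : Prop where
  subU : D ⊆ (nu \ lam) ∪ xs
  dmU : dm = ((nu \ lam) ∪ xs) \ D
  twocol : ∀ r c, (r, c) ∈ xs → (r + 1, c) ∈ nu \ lam → ((r, c) ∈ D ↔ (r + 1, c) ∉ D)
  nonadj : ∀ a ∈ D, ∀ b ∈ D, ¬ adjB a b
  mono : ∀ a ∈ dm, ∀ b ∈ dm, ReadBefore a b → g a ≤ g b
  consec : ∀ r c, (r, c) ∈ dm → (r, c + 1) ∈ dm → g (r, c + 1) = g (r, c) + 1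
  low : ∀ b ∈ dm, 1 ≤ g b
  high : ∀ b ∈ dm, g b ≤ t
  attain : ∀ v, 1 ≤ v → v ≤ t → ∃ b ∈ dm, g b = v
  dotR : ∀ r c, (r, c) ∈ D → (r, c + 1) ∈ dm → i + 1 ≤ g (r, c + 1)
  dotB : ∀ r c, (r, c) ∈ D → (r + 1, c) ∈ dm → i + 1 ≤ g (r + 1, c)
  dotL : ∀ r c, (r, c + 1) ∈ D → (r, c) ∈ dm → g (r, c) ≤ i
  dotA : ∀ r c, (r + 1, c) ∈ D → (r, c) ∈ dm → g (r, c) ≤ i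
  nine : ∀ r c, (r, c + 1) ∈ D → (r, c) ∈ dm → (r, c + 2) ∈ (nu \ lam) ∪ xs →
    g (r, c) = i ∧ (r, c + 2) ∈ dm ∧ g (r, c + 2) = i + 1
  ten : ∀ r c, (r, c) ∈ D → (r + 1, c) ∈ dm → (r, c + 1) ∈ dm →
    g (r, c + 1) = g (r + 1, c) ∨ g (r, c + 1) = g (r + 1, c) + 1
  xsbox : ∀ w ∈ xs, w ∈ dm → g w ≤ i

variable {i : ℕ} {D dm : Finset Box} {g : Box → ℕ}

lemma Inv.disj (hI : Inv xs lam nu t i D dm g) {b : Box} (h1 : b ∈ D) (h2 : b ∈ dm) :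
    False := by
  rw [hI.dmU] at h2
  exact (Finset.mem_sdiff.mp h2).2 h1

lemma Inv.dm_subU (hI : Inv xs lam nu t i D dm g) {b : Box} (h : b ∈ dm) :
    b ∈ (nu \ lam) ∪ xs := by
  rw [hI.dmU] at h
  exact (Finset.mem_sdiff.mp h).1

lemma Inv.mem_dm (hI : Inv xs lam nu t i D dm g) {b : Box}
    (hU : b ∈ (nu \ lam) ∪ xs) (hD : b ∉ D) : b ∈ dm := by
  rw [hI.dmU]
  exact Finset.mem_sdiff.mpr ⟨hU, hD⟩

include hlam hstrip hnu hxsc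

/-- Two boxes of `dm` never share a column. -/
lemma Inv.dm_col (hI : Inv xs lam nu t i D dm g) {r r' c : ℕ}
    (h1 : (r, c) ∈ dm) (h2 : (r', c) ∈ dm) : r = r' := by
  have hU1 := hI.dm_subU h1
  have hU2 := hI.dm_subU h2
  -- wlog r ≤ r'
  have key : ∀ r r' : ℕ, r < r' → (r, c) ∈ dm → (r', c) ∈ dm → False := by
    intro a b hab ha hb
    have hUa := hI.dm_subU ha
    have hUb := hI.dm_subU hb
    rcases Finset.mem_union.mp hUa with hsa | hxa
    · rcases Finset.mem_union.mp hUb with hsb | hxb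
      · exact absurd (strip_col hlam hstrip hnu hxsc hsa hsb) (by omega)
      · exact xs_no_above hlam hstrip hnu hxsc hxb (Finset.mem_union_left _ hsa) hab
    · rcases Finset.mem_union.mp hUb with hsb | hxb
      · have hadj : b = a + 1 := xs_below_adj hlam hstrip hnu hxsc hxa hsb hab
        subst hadj
        have := (hI.twocol a c hxa hsb)
        have hna : (a, c) ∉ D := fun hD => hI.disj hD ha
        have hnb : (a + 1, c) ∉ D := fun hD => hI.disj hD hb
        tauto
      · exact xs_no_above hlam hstrip hnu hxsc hxb (Finset.mem_union_right _ hxa) hab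
  rcases Nat.lt_trichotomy r r' with h | h | h
  · exact absurd (key r r' h h1 h2) not_false
  · exact h
  · exact absurd (key r' r h h2 h1) not_false

end Invariant

end Stmt10
namespace Stmt10

section Preserve

set_option linter.unusedSectionVars false
set_option maxHeartbeats 1000000

variable {lam nu xs : Finset Box} {f : Box → ℕ} {t : ℕ}
variable (hlam : IsYoung lam) (hnu : IsYoung nu)
variable (hstrip : HorizontalStrip (nu \ lam))
variable (hxsc : ∀ x ∈ xs, InnerCorner lam x)

lemma rb_trichotomy (a b : Box) : a = b ∨ ReadBefore a b ∨ ReadBefore b a := by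
  obtain ⟨a1, a2⟩ := a; obtain ⟨b1, b2⟩ := b
  simp only [ReadBefore, Prod.ext_iff]
  omega

include hlam hnu hstrip hxsc

theorem inv_step {i : ℕ} {D dm : Finset Box} {g : Box → ℕ}
    (hI : Inv xs lam nu t i D dm g) (hit : i + 1 ≤ t) :
    Inv xs lam nu t (i + 1) (switchStep (D, dm, g) (i + 1)).1
      (switchStep (D, dm, g) (i + 1)).2.1 (switchStep (D, dm, g) (i + 1)).2.2 := by
  rw [switchStep_def]
  set v := i + 1 with hv
  set S := D ∪ dm.filter (fun c => g c = v) with hSdef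
  set SW : Box → Prop := fun b => b ∈ S ∧ ∃ b' ∈ S, adjB b b' with hSWdef
  show Inv xs lam nu t v
    (dm.filter (fun b => g b = v ∧ SW b) ∪ D.filter (fun b => ¬ SW b))
    (dm.filter (fun b => ¬ (g b = v ∧ SW b)) ∪ D.filter (fun b => SW b))
    (fun b => if (b ∈ D ∧ SW b) then v else g b)
  set ND := dm.filter (fun b => g b = v ∧ SW b) ∪ D.filter (fun b => ¬ SW b) with hNDdef
  set Ndm := dm.filter (fun b => ¬ (g b = v ∧ SW b)) ∪ D.filter (fun b => SW b) with hNdmdef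
  set Ng : Box → ℕ := fun b => if (b ∈ D ∧ SW b) then v else g b with hNgdef
  -- basic membership lemmas
  have hmemS : ∀ b : Box, b ∈ S ↔ (b ∈ D ∨ (b ∈ dm ∧ g b = v)) := by
    intro b; simp [hSdef, Finset.mem_union, Finset.mem_filter]
  have hmND : ∀ b : Box, b ∈ ND ↔ ((b ∈ dm ∧ g b = v ∧ SW b) ∨ (b ∈ D ∧ ¬ SW b)) := by
    intro b; simp [hNDdef, Finset.mem_union, Finset.mem_filter, and_assoc]
  have hmNdm : ∀ b : Box, b ∈ Ndm ↔ ((b ∈ dm ∧ ¬ (g b = v ∧ SW b)) ∨ (b ∈ D ∧ SW b)) := by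
    intro b; simp [hNdmdef, Finset.mem_union, Finset.mem_filter]
  have hNg_dm : ∀ b ∈ dm, Ng b = g b := by
    intro b hb
    have h : ¬ (b ∈ D ∧ SW b) := fun ⟨hD, _⟩ => hI.disj hD hb
    show (if (b ∈ D ∧ SW b) then v else g b) = g b
    exact if_neg h
  have hNg_D : ∀ b ∈ D, SW b → Ng b = v := by
    intro b hb hsw
    show (if (b ∈ D ∧ SW b) then v else g b) = v
    exact if_pos ⟨hb, hsw⟩
  have hUdm : ∀ b : Box, b ∈ (nu \ lam) ∪ xs → b ∈ D ∨ b ∈ dm := by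
    intro b hb
    by_cases h : b ∈ D
    · exact Or.inl h
    · exact Or.inr (hI.mem_dm hb h)
  -- flip characterization for dots
  have hF2 : ∀ r c : ℕ, (r, c) ∈ D → SW (r, c) →
      (((r, c + 1) ∈ dm ∧ g (r, c + 1) = v) ∨ ((r + 1, c) ∈ dm ∧ g (r + 1, c) = v)) := by
    rintro r c hD ⟨-, ⟨b', hb'S, hadj⟩⟩
    obtain ⟨br, bc⟩ := b'
    rcases (hmemS _).mp hb'S with hD' | ⟨hdm', hg'⟩
    · exact absurd hadj (hI.nonadj _ hD _ hD')
    · rcases hadj with ⟨h1, h2 | h2⟩ | ⟨h1, h2 | h2⟩ <;> simp only at h1 h2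
      · -- b' right of dot
        subst h1; subst h2
        exact Or.inl ⟨hdm', hg'⟩
      · -- b' left of dot
        exfalso
        subst h1; subst h2
        have := hI.dotL r bc hD hdm'
        omega
      · -- b' below dot
        subst h1; subst h2
        exact Or.inr ⟨hdm', hg'⟩
      · -- b' above dot
        exfalso
        subst h1; subst h2
        have := hI.dotA br c hD hdm'
        omega
  -- converse: a dot with a v-box to its right or below switches
  have hF2r : ∀ r c : ℕ, (r, c) ∈ D → (r, c + 1) ∈ dm → g (r, c + 1) = v → SW (r, c) := by
    intro r c hD hdm hg
    refine ⟨(hmemS _).mpr (Or.inl hD), (r, c+1), (hmemS _).mpr (Or.inr ⟨hdm, hg⟩), ?_⟩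
    exact Or.inl ⟨rfl, Or.inl rfl⟩
  have hF2b : ∀ r c : ℕ, (r, c) ∈ D → (r + 1, c) ∈ dm → g (r + 1, c) = v → SW (r, c) := by
    intro r c hD hdm hg
    refine ⟨(hmemS _).mpr (Or.inl hD), (r+1, c), (hmemS _).mpr (Or.inr ⟨hdm, hg⟩), ?_⟩
    exact Or.inr ⟨rfl, Or.inl rfl⟩
  -- flip characterization for boxes
  have hF3 : ∀ r c : ℕ, (r, c) ∈ dm → g (r, c) = v → SW (r, c) →
      ((∃ c', c = c' + 1 ∧ (r, c') ∈ D) ∨ (∃ r', r = r' + 1 ∧ (r', c) ∈ D)) := by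
    rintro r c hdm hg ⟨-, ⟨b', hb'S, hadj⟩⟩
    obtain ⟨br, bc⟩ := b'
    rcases (hmemS _).mp hb'S with hD' | ⟨hdm', hg'⟩
    · rcases hadj with ⟨h1, h2 | h2⟩ | ⟨h1, h2 | h2⟩ <;> simp only at h1 h2
      · -- dot right of box: contradiction with dotL
        exfalso
        subst h1; subst h2
        have := hI.dotL r c hD' hdm
        omega
      · -- dot left of box
        subst h1; subst h2
        exact Or.inl ⟨bc, rfl, hD'⟩
      · -- dot below box: contradiction with dotA
        exfalso
        subst h1; subst h2
        have := hI.dotA r c hD' hdm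
        omega
      · -- dot above box
        subst h1; subst h2
        exact Or.inr ⟨br, rfl, hD'⟩
    · exfalso
      rcases hadj with ⟨h1, h2 | h2⟩ | ⟨h1, h2 | h2⟩ <;> simp only at h1 h2
      · subst h1; subst h2
        have := hI.consec r c hdm hdm'
        omega
      · subst h1; subst h2
        have := hI.consec r bc hdm' hdm
        omega
      · subst h1; subst h2
        have := hI.dm_col hlam hnu hstrip hxsc hdm hdm'
        omega
      · subst h1; subst h2
        have := hI.dm_col hlam hnu hstrip hxsc hdm hdm'
        omega
  -- v-boxes that are adjacent to a switching companion do leave `Ndm`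
  have hflipbox_notNdm : ∀ b : Box, b ∈ dm → g b = v → SW b → b ∉ Ndm := by
    intro b hdm hg hsw hmem
    rcases (hmNdm _).mp hmem with ⟨_, hn⟩ | ⟨hD, _⟩
    · exact hn ⟨hg, hsw⟩
    · exact hI.disj hD hdm
  refine { subU := ?_, dmU := ?_, twocol := ?_, nonadj := ?_, mono := ?_, consec := ?_,
           low := ?_, high := ?_, attain := ?_, dotR := ?_, dotB := ?_, dotL := ?_,
           dotA := ?_, nine := ?_, ten := ?_, xsbox := ?_ }
  -- subU
  · intro b hb
    rcases (hmND b).mp hb with ⟨hdm', _, _⟩ | ⟨hD', _⟩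
    · exact hI.dm_subU hdm'
    · exact hI.subU hD'
  -- dmU
  · ext b
    rw [Finset.mem_sdiff]
    constructor
    · intro hb
      rcases (hmNdm b).mp hb with ⟨hdm', hn⟩ | ⟨hD', hsw'⟩
      · refine ⟨hI.dm_subU hdm', fun hND => ?_⟩
        rcases (hmND b).mp hND with ⟨_, hg', hsw'⟩ | ⟨hD', _⟩
        · exact hn ⟨hg', hsw'⟩
        · exact hI.disj hD' hdm'
      · refine ⟨hI.subU hD', fun hND => ?_⟩
        rcases (hmND b).mp hND with ⟨hdm', _, _⟩ | ⟨_, hnsw⟩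
        · exact hI.disj hD' hdm'
        · exact hnsw hsw'
    · rintro ⟨hU, hnND⟩
      by_cases hD' : b ∈ D
      · by_cases hsw' : SW b
        · exact (hmNdm b).mpr (Or.inr ⟨hD', hsw'⟩)
        · exact absurd ((hmND b).mpr (Or.inr ⟨hD', hsw'⟩)) hnND
      · have hdm' : b ∈ dm := hI.mem_dm hU hD'
        refine (hmNdm b).mpr (Or.inl ⟨hdm', fun hgsw => ?_⟩)
        exact hnND ((hmND b).mpr (Or.inl ⟨hdm', hgsw.1, hgsw.2⟩))
  -- twocol
  · intro r c hx hs
    have hsU : (r+1, c) ∈ (nu \ lam) ∪ xs := Finset.mem_union_left _ hs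
    have hxU : (r, c) ∈ (nu \ lam) ∪ xs := Finset.mem_union_right _ hx
    by_cases hwD : (r, c) ∈ D
    · have hmD : (r+1, c) ∉ D := (hI.twocol r c hx hs).mp hwD
      have hmdm : (r+1, c) ∈ dm := hI.mem_dm hsU hmD
      by_cases hsw : SW (r, c)
      · have hgm : g (r+1, c) = v := by
          rcases hF2 r c hwD hsw with ⟨hrd, hrg⟩ | ⟨hbd, hbg⟩
          · have h10 := hI.ten r c hwD hmdm hrd
            have hB := hI.dotB r c hwD hmdm
            omega
          · exact hbg
        have hswm : SW (r+1, c) := by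
          refine ⟨(hmemS _).mpr (Or.inr ⟨hmdm, hgm⟩), (r, c), (hmemS _).mpr (Or.inl hwD), ?_⟩
          exact Or.inr ⟨rfl, Or.inr rfl⟩
        have hw1 : (r, c) ∉ ND := by
          intro hND
          rcases (hmND _).mp hND with ⟨hdm', _, _⟩ | ⟨_, hnsw⟩
          · exact hI.disj hwD hdm'
          · exact hnsw hsw
        have hm1 : (r+1, c) ∈ ND := (hmND _).mpr (Or.inl ⟨hmdm, hgm, hswm⟩)
        exact iff_of_false hw1 (fun h => h hm1)
      · have hw1 : (r, c) ∈ ND := (hmND _).mpr (Or.inr ⟨hwD, hsw⟩)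
        have hm1 : (r+1, c) ∉ ND := by
          intro hND
          rcases (hmND _).mp hND with ⟨hdm', hg', _⟩ | ⟨hD', _⟩
          · exact hsw (hF2b r c hwD hdm' hg')
          · exact hmD hD'
        exact iff_of_true hw1 (fun h => absurd hm1 (by simpa using h))
    · have hmD : (r+1, c) ∈ D := by
        by_contra hmD'
        exact hwD ((hI.twocol r c hx hs).mpr hmD')
      have hwdm : (r, c) ∈ dm := hI.mem_dm hxU hwD
      have hnswm : ¬ SW (r+1, c) := by
        intro hswm
        rcases hF2 (r+1) c hmD hswm with ⟨hrd, _⟩ | ⟨hbd, _⟩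
        · exact twocol_bottom_rightmost hlam hstrip hnu hxsc hx hs (hI.dm_subU hrd)
        · exact strip_no_below hlam hstrip hnu hxsc hs (hI.dm_subU hbd)
      have hm1 : (r+1, c) ∈ ND := (hmND _).mpr (Or.inr ⟨hmD, hnswm⟩)
      have hw1 : (r, c) ∉ ND := by
        intro hND
        rcases (hmND _).mp hND with ⟨_, hg', _⟩ | ⟨hD', _⟩
        · have := hI.xsbox _ hx hwdm; omega
        · exact hwD hD'
      exact iff_of_false hw1 (fun h => h hm1)
  -- nonadj
  · intro a ha b hb hadj
    rcases (hmND a).mp ha with ⟨hadm, hag, hasw⟩ | ⟨haD, hansw⟩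
    · rcases (hmND b).mp hb with ⟨hbdm, hbg, hbsw⟩ | ⟨hbD, hbnsw⟩
      · obtain ⟨a1, a2⟩ := a; obtain ⟨b1, b2⟩ := b
        rcases hadj with ⟨h1, h2 | h2⟩ | ⟨h1, h2 | h2⟩ <;> simp only at h1 h2
        · subst h1; subst h2; have := hI.consec a1 a2 hadm hbdm; omega
        · subst h1; subst h2; have := hI.consec a1 b2 hbdm hadm; omega
        · subst h1; subst h2; have := hI.dm_col hlam hnu hstrip hxsc hadm hbdm; omega
        · subst h1; subst h2; have := hI.dm_col hlam hnu hstrip hxsc hadm hbdm; omega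
      · exact hbnsw ⟨(hmemS b).mpr (Or.inl hbD), a,
          (hmemS a).mpr (Or.inr ⟨hadm, hag⟩), adjB_symm hadj⟩
    · rcases (hmND b).mp hb with ⟨hbdm, hbg, hbsw⟩ | ⟨hbD, hbnsw⟩
      · exact hansw ⟨(hmemS a).mpr (Or.inl haD), b,
          (hmemS b).mpr (Or.inr ⟨hbdm, hbg⟩), hadj⟩
      · exact hI.nonadj a haD b hbD hadj
  -- mono
  · intro a ha b hb hrb
    rcases (hmNdm a).mp ha with ⟨hadm, hak⟩ | ⟨haD, hasw⟩
    · rcases (hmNdm b).mp hb with ⟨hbdm, hbk⟩ | ⟨hbD, hbsw⟩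
      · rw [hNg_dm a hadm, hNg_dm b hbdm]; exact hI.mono a hadm b hbdm hrb
      · -- old a, freshly filled b
        rw [hNg_dm a hadm, hNg_D b hbD hbsw]
        obtain ⟨br, bc⟩ := b
        rcases hF2 br bc hbD hbsw with ⟨hmdm, hmg⟩ | ⟨hmdm, hmg⟩
        · -- trigger box to the right of b
          obtain ⟨a1, a2⟩ := a
          by_cases hne : (a1, a2) = ((br : ℕ), bc + 1)
          · rw [hne]; omega
          · have hrb' : ReadBefore (a1, a2) (br, bc + 1) := by
              rcases hrb with h | ⟨h1, h2⟩
              · simp only at h; exact Or.inl h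
              · simp only at h1 h2
                refine Or.inr ⟨h1, ?_⟩
                have : ¬(a1 = br ∧ a2 = bc + 1) := by
                  simpa [Prod.ext_iff] using hne
                omega
            have := hI.mono _ hadm _ hmdm hrb'
            omega
        · -- trigger box below b
          have hbU := hI.subU hbD
          have hmU := hI.dm_subU hmdm
          have hbxs : (br, bc) ∈ xs := by
            rcases Finset.mem_union.mp hbU with hbs | hbxs
            · exact absurd hmU (fun h => strip_no_below hlam hstrip hnu hxsc hbs h)
            · exact hbxs
          have hms : (br + 1, bc) ∈ nu \ lam := by
            rcases Finset.mem_union.mp hmU with h | h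
            · exact h
            · exact absurd (Or.inr ⟨rfl, Or.inl rfl⟩ : adjB (br, bc) (br+1, bc))
                (fun hadj => xs_nonadj hlam hstrip hnu hxsc hbxs h hadj)
          obtain ⟨a1, a2⟩ := a
          rcases hrb with h | ⟨h1, h2⟩
          · simp only at h
            rcases Nat.lt_or_ge (br + 1) a1 with hlt | hge
            · have := hI.mono _ hadm _ hmdm (Or.inl hlt)
              omega
            · have ha1 : a1 = br + 1 := by omega
              subst ha1
              rcases Nat.lt_trichotomy a2 bc with hlt2 | heq2 | hgt2
              · have := hI.mono _ hadm _ hmdm (Or.inr ⟨rfl, hlt2⟩)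
                omega
              · subst heq2; omega
              · exfalso
                have haU := hI.dm_subU hadm
                rcases Nat.lt_or_ge (bc + 1) a2 with h3 | h3
                · rcases Finset.mem_union.mp haU with has | haxs
                  · exact twocol_bottom_rightmost hlam hstrip hnu hxsc hbxs hms
                      (Finset.mem_union_left _
                        (strip_interval hlam hnu hms has (by omega) (by omega)))
                  · exact xs_no_left hlam hstrip hnu hxsc haxs
                      (Finset.mem_union_left _ hms) (by omega)
                · have ha2 : a2 = bc + 1 := by omega
                  subst ha2
                  exact twocol_bottom_rightmost hlam hstrip hnu hxsc hbxs hms haU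
          · simp only at h1 h2
            exfalso
            subst h1
            exact xs_no_left hlam hstrip hnu hxsc hbxs (hI.dm_subU hadm) h2
    · rcases (hmNdm b).mp hb with ⟨hbdm, hbk⟩ | ⟨hbD, hbsw⟩
      · -- freshly filled a, old b
        rw [hNg_D a haD hasw, hNg_dm b hbdm]
        obtain ⟨a1, a2⟩ := a
        rcases hF2 a1 a2 haD hasw with ⟨hmdm, hmg⟩ | ⟨hmdm, hmg⟩
        · obtain ⟨b1, b2⟩ := b
          by_cases hbe : ((b1 : ℕ), b2) = (a1, a2 + 1)
          · exfalso
            apply hbk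
            rw [hbe]
            exact ⟨hmg, ⟨(hmemS _).mpr (Or.inr ⟨hmdm, hmg⟩), (a1, a2),
              (hmemS _).mpr (Or.inl haD), Or.inl ⟨rfl, Or.inr rfl⟩⟩⟩
          · have hrb' : ReadBefore (a1, a2 + 1) (b1, b2) := by
              rcases hrb with h | ⟨h1, h2⟩
              · simp only at h; exact Or.inl h
              · simp only at h1 h2
                refine Or.inr ⟨h1, ?_⟩
                have : ¬(b1 = a1 ∧ b2 = a2 + 1) := by
                  simpa [Prod.ext_iff] using hbe
                omega
            have := hI.mono _ hmdm _ hbdm hrb'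
            omega
        · obtain ⟨b1, b2⟩ := b
          have hrb' : ReadBefore (a1 + 1, a2) (b1, b2) := by
            rcases hrb with h | ⟨h1, h2⟩
            · simp only at h; exact Or.inl (by omega)
            · simp only at h1 h2; exact Or.inl (by omega)
          have := hI.mono _ hmdm _ hbdm hrb'
          omega
      · rw [hNg_D a haD hasw, hNg_D b hbD hbsw]
  -- consec
  · intro r c h1 h2
    rcases (hmNdm _).mp h1 with ⟨hdm1, hk1⟩ | ⟨hD1, hsw1⟩
    · rcases (hmNdm _).mp h2 with ⟨hdm2, hk2⟩ | ⟨hD2, hsw2⟩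
      · rw [hNg_dm _ hdm1, hNg_dm _ hdm2]; exact hI.consec r c hdm1 hdm2
      · rw [hNg_dm _ hdm1, hNg_D _ hD2 hsw2]
        rcases hF2 r (c+1) hD2 hsw2 with ⟨hmdm, hmg⟩ | ⟨hmdm, hmg⟩
        · have h9 := hI.nine r c hD2 hdm1 (hI.dm_subU hmdm)
          omega
        · exfalso
          have hxs2 : (r, c+1) ∈ xs := by
            rcases Finset.mem_union.mp (hI.subU hD2) with hs2 | hx2
            · exact absurd (hI.dm_subU hmdm)
                (fun h => strip_no_below hlam hstrip hnu hxsc hs2 h)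
            · exact hx2
          exact xs_no_left hlam hstrip hnu hxsc hxs2 (hI.dm_subU hdm1) (by omega)
    · rcases (hmNdm _).mp h2 with ⟨hdm2, hk2⟩ | ⟨hD2, hsw2⟩
      · rw [hNg_D _ hD1 hsw1, hNg_dm _ hdm2]
        rcases hF2 r c hD1 hsw1 with ⟨hmdm, hmg⟩ | ⟨hmdm, hmg⟩
        · exfalso
          apply hk2
          exact ⟨hmg, ⟨(hmemS _).mpr (Or.inr ⟨hmdm, hmg⟩), (r, c),
            (hmemS _).mpr (Or.inl hD1), Or.inl ⟨rfl, Or.inr rfl⟩⟩⟩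
        · have h10 := hI.ten r c hD1 hmdm hdm2
          rcases h10 with h | h
          · exfalso
            apply hk2
            exact ⟨by omega, ⟨(hmemS _).mpr (Or.inr ⟨hdm2, by omega⟩), (r, c),
              (hmemS _).mpr (Or.inl hD1), Or.inl ⟨rfl, Or.inr rfl⟩⟩⟩
          · omega
      · exact absurd (Or.inl ⟨rfl, Or.inl rfl⟩ : adjB (r, c) (r, c+1))
          (hI.nonadj _ hD1 _ hD2)
  -- low
  · intro b hb
    rcases (hmNdm b).mp hb with ⟨hdm', _⟩ | ⟨hD', hsw'⟩
    · rw [hNg_dm b hdm']; exact hI.low b hdm'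
    · rw [hNg_D b hD' hsw']; omega
  -- high
  · intro b hb
    rcases (hmNdm b).mp hb with ⟨hdm', _⟩ | ⟨hD', hsw'⟩
    · rw [hNg_dm b hdm']; exact hI.high b hdm'
    · rw [hNg_D b hD' hsw']; omega
  -- attain
  · intro u hu1 hu2
    obtain ⟨b, hbdm, hbg⟩ := hI.attain u hu1 hu2
    by_cases hflip : g b = v ∧ SW b
    · obtain ⟨b1, b2⟩ := b
      rcases hF3 b1 b2 hbdm hflip.1 hflip.2 with ⟨c', hc', hD'⟩ | ⟨r', hr', hD'⟩
      · subst hc'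
        have hswd : SW (b1, c') := hF2r b1 c' hD' hbdm hflip.1
        refine ⟨(b1, c'), (hmNdm _).mpr (Or.inr ⟨hD', hswd⟩), ?_⟩
        rw [hNg_D _ hD' hswd]
        have := hflip.1
        omega
      · subst hr'
        have hswd : SW (r', b2) := hF2b r' b2 hD' hbdm hflip.1
        refine ⟨(r', b2), (hmNdm _).mpr (Or.inr ⟨hD', hswd⟩), ?_⟩
        rw [hNg_D _ hD' hswd]
        have := hflip.1
        omega
    · exact ⟨b, (hmNdm _).mpr (Or.inl ⟨hbdm, hflip⟩), by rw [hNg_dm b hbdm]; exact hbg⟩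
  -- dotR
  · intro r c h1 h2
    rcases (hmND _).mp h1 with ⟨hdm1, hg1, hsw1⟩ | ⟨hD1, hnsw1⟩
    · rcases (hmNdm _).mp h2 with ⟨hdm2, hk2⟩ | ⟨hD2, hsw2⟩
      · rw [hNg_dm _ hdm2]
        have := hI.consec r c hdm1 hdm2
        omega
      · exfalso
        have := hI.dotL r c hD2 hdm1
        omega
    · rcases (hmNdm _).mp h2 with ⟨hdm2, hk2⟩ | ⟨hD2, hsw2⟩
      · rw [hNg_dm _ hdm2]
        have h0 := hI.dotR r c hD1 hdm2
        rcases Nat.lt_or_ge v (g (r, c+1)) with h | h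
        · omega
        · exfalso
          exact hnsw1 (hF2r r c hD1 hdm2 (by omega))
      · exact absurd (Or.inl ⟨rfl, Or.inl rfl⟩ : adjB (r, c) (r, c+1))
          (hI.nonadj _ hD1 _ hD2)
  -- dotB
  · intro r c h1 h2
    rcases (hmND _).mp h1 with ⟨hdm1, hg1, hsw1⟩ | ⟨hD1, hnsw1⟩
    · rcases (hmNdm _).mp h2 with ⟨hdm2, hk2⟩ | ⟨hD2, hsw2⟩
      · exfalso
        have := hI.dm_col hlam hnu hstrip hxsc hdm1 hdm2
        omega
      · exfalso
        have := hI.dotA r c hD2 hdm1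
        omega
    · rcases (hmNdm _).mp h2 with ⟨hdm2, hk2⟩ | ⟨hD2, hsw2⟩
      · rw [hNg_dm _ hdm2]
        have h0 := hI.dotB r c hD1 hdm2
        rcases Nat.lt_or_ge v (g (r+1, c)) with h | h
        · omega
        · exfalso
          exact hnsw1 (hF2b r c hD1 hdm2 (by omega))
      · exact absurd (Or.inr ⟨rfl, Or.inl rfl⟩ : adjB (r, c) (r+1, c))
          (hI.nonadj _ hD1 _ hD2)
  -- dotL
  · intro r c h1 h2
    rcases (hmNdm _).mp h2 with ⟨hdm2, hk2⟩ | ⟨hD2, hsw2⟩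
    · rw [hNg_dm _ hdm2]
      rcases (hmND _).mp h1 with ⟨hdm1, hg1, hsw1⟩ | ⟨hD1, hnsw1⟩
      · have := hI.consec r c hdm2 hdm1
        omega
      · have := hI.dotL r c hD1 hdm2
        omega
    · rw [hNg_D _ hD2 hsw2]
  -- dotA
  · intro r c h1 h2
    rcases (hmNdm _).mp h2 with ⟨hdm2, hk2⟩ | ⟨hD2, hsw2⟩
    · rw [hNg_dm _ hdm2]
      rcases (hmND _).mp h1 with ⟨hdm1, hg1, hsw1⟩ | ⟨hD1, hnsw1⟩
      · exfalso
        have := hI.dm_col hlam hnu hstrip hxsc hdm2 hdm1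
        omega
      · have := hI.dotA r c hD1 hdm2
        omega
    · rw [hNg_D _ hD2 hsw2]
  -- nine
  · intro r c h1 h2 hU2
    rcases (hmND _).mp h1 with ⟨hdm1, hg1, hsw1⟩ | ⟨hD1, hnsw1⟩
    · rcases hF3 r (c+1) hdm1 hg1 hsw1 with ⟨c', hc', hD'⟩ | ⟨r', hr', hD'⟩
      · have hcc : c' = c := by omega
        rw [hcc] at hD'
        rcases (hmNdm _).mp h2 with ⟨hdm2, _⟩ | ⟨hD2, hsw2⟩
        · exact absurd hdm2 (fun h => hI.disj hD' h)
        · refine ⟨by rw [hNg_D _ hD2 hsw2], ?_⟩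
          rcases hUdm _ hU2 with hD3 | hdm3
          · exfalso
            have := hI.dotL r (c+1) hD3 hdm1
            omega
          · have hdm3' : ((r : ℕ), c + 1 + 1) ∈ dm := by
              rwa [show c + 1 + 1 = c + 2 by omega]
            have hc3 := hI.consec r (c+1) hdm1 hdm3'
            rw [show c + 1 + 1 = c + 2 by omega] at hc3
            have hkeep3 : (r, c+2) ∈ Ndm :=
              (hmNdm _).mpr (Or.inl ⟨hdm3, fun hgsw => by have := hgsw.1; omega⟩)
            exact ⟨hkeep3, by rw [hNg_dm _ hdm3]; omega⟩
      · exfalso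
        have haU := hI.subU hD'
        rcases Finset.mem_union.mp haU with has | haxs
        · refine strip_no_below hlam hstrip hnu hxsc has ?_
          rw [← hr']
          exact hI.dm_subU hdm1
        · have hms : (r' + 1, c + 1) ∈ nu \ lam := by
            rcases Finset.mem_union.mp (hI.dm_subU hdm1) with h | h
            · rwa [hr'] at h
            · exact absurd (Or.inr ⟨rfl, Or.inl rfl⟩ : adjB (r', c+1) (r'+1, c+1))
                (fun hadj => xs_nonadj hlam hstrip hnu hxsc haxs (hr' ▸ h) hadj)
          have hU2' : ((r : ℕ), c + 1 + 1) ∈ (nu \ lam) ∪ xs := by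
            rw [show c + 1 + 1 = c + 2 by omega]; exact hU2
          refine twocol_bottom_rightmost hlam hstrip hnu hxsc haxs hms ?_
          rw [← hr']
          exact hU2'
    · exfalso
      rcases (hmNdm _).mp h2 with ⟨hdm2, _⟩ | ⟨hD2, _⟩
      · have h9 := hI.nine r c hD1 hdm2 hU2
        have hdm3' : ((r : ℕ), c + 1 + 1) ∈ dm := by
          rw [show c + 1 + 1 = c + 2 by omega]; exact h9.2.1
        refine hnsw1 (hF2r r (c+1) hD1 hdm3' ?_)
        rw [show c + 1 + 1 = c + 2 by omega]
        have := h9.2.2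
        omega
      · exact hI.nonadj _ hD2 _ hD1 (Or.inl ⟨rfl, Or.inl rfl⟩)
  -- ten
  · intro r c h1 h2 h3
    rcases (hmND _).mp h1 with ⟨hdm1, hg1, hsw1⟩ | ⟨hD1, hnsw1⟩
    · exfalso
      have hwU := hI.dm_subU hdm1
      rcases Finset.mem_union.mp hwU with hws | hwxs
      · have hbl : (r+1, c) ∈ (nu \ lam) ∪ xs := by
          rcases (hmNdm _).mp h2 with ⟨hdm2, _⟩ | ⟨hD2, _⟩
          · exact hI.dm_subU hdm2
          · exact hI.subU hD2
        exact strip_no_below hlam hstrip hnu hxsc hws hbl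
      · have := hI.xsbox _ hwxs hdm1
        omega
    · rcases (hmNdm _).mp h2 with ⟨hdm2, hk2⟩ | ⟨hD2, hsw2⟩
      · rcases (hmNdm _).mp h3 with ⟨hdm3, hk3⟩ | ⟨hD3, hsw3⟩
        · rw [hNg_dm _ hdm2, hNg_dm _ hdm3]; exact hI.ten r c hD1 hdm2 hdm3
        · exact absurd (Or.inl ⟨rfl, Or.inl rfl⟩ : adjB (r, c) (r, c+1))
            (hI.nonadj _ hD1 _ hD3)
      · exact absurd (Or.inr ⟨rfl, Or.inl rfl⟩ : adjB (r, c) (r+1, c))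
          (hI.nonadj _ hD1 _ hD2)
  -- xsbox
  · intro w hw hwNdm
    rcases (hmNdm _).mp hwNdm with ⟨hdm', _⟩ | ⟨hD', hsw'⟩
    · rw [hNg_dm _ hdm']
      have := hI.xsbox _ hw hdm'
      omega
    · rw [hNg_D _ hD' hsw']

end Preserve

end Stmt10
namespace Stmt10

section Assemble

set_option linter.unusedSectionVars false
set_option maxHeartbeats 1000000

variable {lam nu xs : Finset Box} {f : Box → ℕ} {t : ℕ}
variable (hlam : IsYoung lam) (hnu : IsYoung nu)
variable (hP : IsPieri (nu \ lam) f t)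
variable (hxsc : ∀ x ∈ xs, InnerCorner lam x)

include hlam hnu hP hxsc

lemma inv_init (hne : (nu \ lam).Nonempty) :
    Inv xs lam nu t 0 xs (nu \ lam) f := by
  have hstrip := hP.1
  have hdisj : ∀ b : Box, b ∈ nu \ lam → b ∉ xs := by
    intro b hb hbx
    exact (Finset.mem_sdiff.mp hb).2 (hxsc _ hbx).1
  refine { subU := fun b hb => Finset.mem_union_right _ hb,
           dmU := ?_, twocol := ?_, nonadj := ?_, mono := ?_, consec := hP.2.1,
           low := fun b hb => (hP.2.2.2.2.1 b hb).1,
           high := fun b hb => (hP.2.2.2.2.1 b hb).2,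
           attain := pieri_attain hlam hnu hP hne,
           dotR := ?_, dotB := ?_, dotL := ?_, dotA := ?_, nine := ?_, ten := ?_,
           xsbox := ?_ }
  · ext b
    constructor
    · intro hb
      exact Finset.mem_sdiff.mpr ⟨Finset.mem_union_left _ hb, hdisj b hb⟩
    · intro hb
      obtain ⟨hU, hnx⟩ := Finset.mem_sdiff.mp hb
      rcases Finset.mem_union.mp hU with h | h
      · exact h
      · exact absurd h hnx
  · intro r c hx hs
    exact iff_of_true hx (hdisj _ hs)
  · exact fun a ha b hb hadj => xs_nonadj hlam hstrip hnu hxsc ha hb hadj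
  · exact fun a ha b hb hrb => pieri_mono hlam hnu hP ha hb hrb
  · exact fun r c _ hdm => (hP.2.2.2.2.1 _ hdm).1
  · exact fun r c _ hdm => (hP.2.2.2.2.1 _ hdm).1
  · intro r c hx hdm
    exact absurd hdm (fun h => xs_no_left hlam hstrip hnu hxsc hx
      (Finset.mem_union_left _ h) (by omega))
  · intro r c hx hdm
    exact absurd hdm (fun h => xs_no_above hlam hstrip hnu hxsc hx
      (Finset.mem_union_left _ h) (by omega))
  · intro r c hx hdm _
    exact absurd hdm (fun h => xs_no_left hlam hstrip hnu hxsc hx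
      (Finset.mem_union_left _ h) (by omega))
  · -- ten: the Pieri row-link condition
    intro r c hx hs hz
    have hRight : RightmostIn (nu \ lam) (r + 1) c := by
      refine ⟨hs, fun c' hc' hmem => ?_⟩
      exact twocol_bottom_rightmost hlam hstrip hnu hxsc hx hs
        (Finset.mem_union_left _ (strip_interval hlam hnu hs hmem (by omega) (by omega)))
    have hLeft : LeftmostIn (nu \ lam) r (c + 1) := by
      refine ⟨hz, fun c' hc' hmem => ?_⟩
      rcases Nat.lt_or_ge c' c with h | h
      · exact xs_no_left hlam hstrip hnu hxsc hx (Finset.mem_union_left _ hmem) h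
      · have : c' = c := by omega
        subst this
        exact hdisj _ hmem hx
    have := hP.2.2.2.1 r (c+1) (r+1) c hLeft hRight (by omega)
      (fun b hb => by omega)
    tauto
  · intro w hw hdm
    exact absurd hw (hdisj _ hdm)

lemma inv_kstate (hne : (nu \ lam).Nonempty) :
    ∀ m, m ≤ t → Inv xs lam nu t m (KState xs (nu \ lam) f m).1
      (KState xs (nu \ lam) f m).2.1 (KState xs (nu \ lam) f m).2.2 := by
  intro m
  induction m with
  | zero =>
      intro _
      rw [KState_zero]
      exact inv_init hlam hnu hP hxsc hne
  | succ n ih =>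
      intro hle
      rw [KState_succ]
      exact inv_step hlam hnu hP.1 hxsc (ih (by omega)) hle

lemma inv_final {i : ℕ} {D dm : Finset Box} {g : Box → ℕ}
    (hI : Inv xs lam nu t i D dm g) (ht1 : 1 ≤ t) : IsPieri dm g t := by
  have hstrip := hP.1
  refine ⟨?_, hI.consec, ?_, ?_, fun b hb => ⟨hI.low b hb, hI.high b hb⟩,
    fun _ => hI.attain t ht1 le_rfl⟩
  · -- horizontal strip
    intro a ha b hb hne heq
    obtain ⟨a1, a2⟩ := a
    obtain ⟨b1, b2⟩ := b
    simp only at heq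
    subst heq
    exact hne (by
      rw [hI.dm_col hlam hnu hstrip hxsc ha hb])
  · -- leftmost of bottom row carries 1
    intro r c hL hbot
    obtain ⟨z, hz, hz1⟩ := hI.attain 1 le_rfl ht1
    rcases rb_trichotomy z (r, c) with heq | hrb | hrb
    · rw [← heq]; exact hz1
    · -- z reads before (r,c): impossible
      obtain ⟨z1, z2⟩ := z
      rcases hrb with h | ⟨h1, h2⟩
      · simp only at h
        exact absurd (hbot _ hz) (by omega)
      · simp only at h1 h2
        subst h1
        exact absurd hz (hL.2 z2 h2)
    · have h1 := hI.mono _ hL.1 _ hz hrb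
      have h2 := hI.low _ hL.1
      omega
  · -- the row-link condition
    intro r c r' c' hL hR hlt hnob
    have hmono1 : g (r', c') ≤ g (r, c) := hI.mono _ hR.1 _ hL.1 (Or.inl hlt)
    rcases Nat.lt_or_ge (g (r', c') + 1) (g (r, c)) with hbig | hsmall
    · exfalso
      have hbound := hI.high _ hL.1
      obtain ⟨z, hz, hzval⟩ := hI.attain (g (r', c') + 1) (by omega) (by omega)
      obtain ⟨z1, z2⟩ := z
      have hz_after : ReadBefore (r', c') (z1, z2) := by
        rcases rb_trichotomy (z1, z2) (r', c') with heq | hrb | hrb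
        · exfalso
          rw [heq] at hzval
          omega
        · exfalso
          have := hI.mono _ hz _ hR.1 hrb
          omega
        · exact hrb
      have hz_before : ReadBefore (z1, z2) (r, c) := by
        rcases rb_trichotomy (z1, z2) (r, c) with heq | hrb | hrb
        · exfalso
          rw [heq] at hzval
          omega
        · exact hrb
        · exfalso
          have := hI.mono _ hL.1 _ hz hrb
          omega
      have hz1r' : z1 < r' := by
        rcases hz_after with h | ⟨h1, h2⟩
        · simpa using h
        · simp only at h1 h2
          subst h1
          exact absurd hz (hR.2 z2 h2)
      have hz1r : r < z1 := by
        rcases hz_before with h | ⟨h1, h2⟩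
        · simpa using h
        · simp only at h1 h2
          subst h1
          exact absurd hz (hL.2 z2 h2)
      exact hnob (z1, z2) hz ⟨hz1r, hz1r'⟩
    · omega

end Assemble

end Stmt10
/-- a K-jdt slide applied to a `t`-Pieri filling results in a
`t`-Pieri filling. -/
theorem stmt10 (lam nu : Finset Box) (f : Box → ℕ) (t : ℕ) (xs : Finset Box)
    (hlam : IsYoung lam) (hnu : IsYoung nu) (hsub : lam ⊆ nu)
    (hP : IsPieri (nu \ lam) f t) (hxs : xs.Nonempty)
    (hxsc : ∀ x ∈ xs, InnerCorner lam x) :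
    IsPieri (KJdt xs (nu \ lam) f).1 (KJdt xs (nu \ lam) f).2 t := by
  by_cases hne : (nu \ lam).Nonempty
  · have ht1 : 1 ≤ t := by
      obtain ⟨b, hb⟩ := hne
      have := hP.2.2.2.2.1 b hb
      omega
    have hmax : maxEntry (nu \ lam) f = t := by
      apply le_antisymm
      · exact Finset.sup_le (fun b hb => (hP.2.2.2.2.1 b hb).2)
      · obtain ⟨b, hb, hfb⟩ := hP.2.2.2.2.2 hne
        calc t = f b := hfb.symm
          _ ≤ _ := Finset.le_sup hb
    have hfin := Stmt10.inv_kstate hlam hnu hP hxsc hne t le_rfl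
    have hres : IsPieri (KState xs (nu \ lam) f t).2.1 (KState xs (nu \ lam) f t).2.2 t :=
      Stmt10.inv_final hlam hnu hP hxsc hfin ht1
    unfold KJdt
    rw [hmax]
    exact hres
  · have hdom : nu \ lam = ∅ := Finset.not_nonempty_iff_eq_empty.mp hne
    rw [hdom]
    unfold KJdt
    rw [show maxEntry (∅ : Finset Box) f = 0 from Finset.sup_empty, Stmt10.KState_zero]
    refine ⟨fun a ha => (Finset.notMem_empty a ha).elim,
      fun r c h => (Finset.notMem_empty _ h).elim,
      fun r c hL => (Finset.notMem_empty _ hL.1).elim,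
      fun r c r' c' hL => (Finset.notMem_empty _ hL.1).elim,
      fun b hb => (Finset.notMem_empty _ hb).elim,
      fun hne' => (Finset.not_nonempty_empty hne').elim⟩
end
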